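/- arXiv:2510.03268 — 5 statements merged into one kernel-verified Lean document; each statement's English description precedes it below -/
import Mathlib

section
/- For every ν > 0 and every m > 0, the derivative of the function G(m) = log(I_ν(m)) − ν·log(m) equals I_{ν+1}(m)/I_ν(m), and this value lies strictly between 0 and 1. In particular, G is strictly increasing with derivative bounded by 1. -/
open Real

noncomputable def besselI (ν m : ℝ) : ℝ :=
  ∑' k : ℕ, (1 / ((Nat.factorial k : ℝ) * Real.Gamma (ν + k + 1))) *
    (m / 2) ^ (2 * (k : ℝ) + ν)

namespace BesselProof

noncomputable def c (ν : ℝ) (k : ℕ) : ℝ :=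
  1 / ((Nat.factorial k : ℝ) * Real.Gamma (ν + k + 1))

lemma besselI_def (ν x : ℝ) :
    besselI ν x = ∑' k : ℕ, c ν k * (x / 2) ^ (2 * (k : ℝ) + ν) := rfl

lemma gamma_pos {ν : ℝ} (hν : 0 < ν) (k : ℕ) : 0 < Real.Gamma (ν + k + 1) :=
  Real.Gamma_pos_of_pos (by positivity)

lemma c_pos {ν : ℝ} (hν : 0 < ν) (k : ℕ) : 0 < c ν k := by
  have h1 := gamma_pos hν k
  have h2 : (0:ℝ) < k.factorial := by exact_mod_cast k.factorial_pos
  exact div_pos one_pos (mul_pos h2 h1)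

lemma gamma_factorial {ν : ℝ} (hν : 0 < ν) (k : ℕ) :
    (k.factorial : ℝ) * Real.Gamma (ν + 1) ≤ Real.Gamma (ν + k + 1) := by
  induction k with
  | zero => simp
  | succ k ih =>
    have hne : ν + k + 1 ≠ 0 := by positivity
    have h2 : Real.Gamma (ν + ((k+1 : ℕ) : ℝ) + 1) = (ν + k + 1) * Real.Gamma (ν + k + 1) := by
      rw [show (ν + ((k+1:ℕ):ℝ) + 1) = (ν + k + 1) + 1 by push_cast; ring,
        Real.Gamma_add_one hne]
    rw [h2]
    have h3 : (((k+1:ℕ)).factorial : ℝ) = ((k:ℝ)+1) * k.factorial := by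
      push_cast [Nat.factorial_succ]; ring
    have hΓ := gamma_pos hν k
    have hfac : (0:ℝ) < k.factorial := by exact_mod_cast k.factorial_pos
    have hΓ1 : 0 < Real.Gamma (ν + 1) := Real.Gamma_pos_of_pos (by linarith)
    rw [h3]
    nlinarith [mul_le_mul_of_nonneg_left ih (by positivity : (0:ℝ) ≤ (k:ℝ)+1)]

lemma term_eq {x : ℝ} (hx : 0 < x) (ν : ℝ) (k : ℕ) :
    (x/2) ^ (2 * (k:ℝ) + ν) = ((x/2)^2)^k * (x/2) ^ ν := by
  have h : (0:ℝ) < x/2 := by linarith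
  rw [Real.rpow_add h]
  congr 1
  rw [show (2*(k:ℝ)) = ((2*k : ℕ) : ℝ) by push_cast; ring, Real.rpow_natCast, pow_mul]

lemma term_le {ν : ℝ} (hν : 0 < ν) (k : ℕ) {y : ℝ} (hy : 0 ≤ y) :
    (2*(k:ℝ)+ν) * c ν k * y^k ≤ ((2+ν)/Real.Gamma (ν+1)) * ((2*y)^k / k.factorial) := by
  have hΓ1 : 0 < Real.Gamma (ν + 1) := Real.Gamma_pos_of_pos (by linarith)
  have hΓk := gamma_pos hν k
  have hF : (1:ℝ) ≤ k.factorial := by exact_mod_cast k.factorial_pos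
  have hFk := gamma_factorial hν k
  have hT : (1:ℝ) ≤ 2^k := one_le_pow₀ (by norm_num : (1:ℝ) ≤ 2)
  have hk2 : (k:ℝ) ≤ 2^k := by exact_mod_cast (Nat.lt_two_pow_self (n := k)).le
  have h2k : (2*(k:ℝ)+ν) ≤ (2+ν) * 2^k := by nlinarith
  have hG1 : Real.Gamma (ν+1) ≤ Real.Gamma (ν + k + 1) := by nlinarith
  have hc : c ν k ≤ 1 / ((k.factorial : ℝ) * Real.Gamma (ν+1)) := by
    unfold c
    apply one_div_le_one_div_of_le (by positivity)
    nlinarith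
  have hyk : (0:ℝ) ≤ y^k := pow_nonneg hy k
  calc (2*(k:ℝ)+ν) * c ν k * y^k
      ≤ ((2+ν) * 2^k) * (1 / ((k.factorial : ℝ) * Real.Gamma (ν+1))) * y^k := by
        apply mul_le_mul_of_nonneg_right _ hyk
        apply mul_le_mul h2k hc (c_pos hν k).le (by positivity)
    _ = ((2+ν)/Real.Gamma (ν+1)) * ((2*y)^k / k.factorial) := by
        rw [mul_pow]; field_simp

lemma summable_wy {ν : ℝ} (hν : 0 < ν) {y : ℝ} (hy : 0 ≤ y) :
    Summable (fun k : ℕ => (2*(k:ℝ)+ν) * c ν k * y^k) := by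
  apply Summable.of_nonneg_of_le
    (fun k => mul_nonneg (mul_nonneg (by positivity) (c_pos hν k).le) (pow_nonneg hy k))
    (fun k => term_le hν k hy)
    ((Real.summable_pow_div_factorial (2*y)).mul_left _)

lemma summable_cy {ν : ℝ} (hν : 0 < ν) {y : ℝ} (hy : 0 ≤ y) :
    Summable (fun k : ℕ => c ν k * y^k) := by
  apply Summable.of_nonneg_of_le
    (fun k => mul_nonneg (c_pos hν k).le (pow_nonneg hy k))
    (fun k => ?_)
    ((summable_wy hν hy).mul_left (1/ν))
  have h1 : c ν k * y^k ≤ ((2*(k:ℝ)+ν)/ν) * (c ν k * y^k) := by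
    have : (1:ℝ) ≤ (2*(k:ℝ)+ν)/ν := by
      rw [le_div_iff₀ hν]; have : (0:ℝ) ≤ (k:ℝ) := Nat.cast_nonneg k; linarith
    nlinarith [mul_nonneg (c_pos hν k).le (pow_nonneg hy k)]
  calc c ν k * y^k ≤ ((2*(k:ℝ)+ν)/ν) * (c ν k * y^k) := h1
    _ = 1/ν * ((2*(k:ℝ)+ν) * c ν k * y^k) := by ring

lemma summable_term {ν : ℝ} (hν : 0 < ν) {x : ℝ} (hx : 0 < x) :
    Summable (fun k : ℕ => c ν k * (x/2) ^ (2*(k:ℝ)+ν)) := by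
  apply Summable.congr (((summable_cy hν (by positivity : (0:ℝ) ≤ (x/2)^2)).mul_right
    ((x/2) ^ ν)))
  intro k
  rw [term_eq hx ν k]; ring

lemma besselI_pos {ν : ℝ} (hν : 0 < ν) {x : ℝ} (hx : 0 < x) : 0 < besselI ν x := by
  rw [besselI_def]
  have h2 : (0:ℝ) < x/2 := by linarith
  refine Summable.tsum_pos (summable_term hν hx) (fun k => ?_) 0 ?_
  · exact mul_nonneg (c_pos hν k).le (Real.rpow_nonneg h2.le _)
  · exact mul_pos (c_pos hν 0) (Real.rpow_pos_of_pos h2 _)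

lemma besselI_lower {ν : ℝ} (hν : 0 < ν) {x : ℝ} (hx : 0 < x) :
    (x/2) ^ ν / Real.Gamma (ν + 1) ≤ besselI ν x := by
  have h2 : (0:ℝ) < x/2 := by linarith
  rw [besselI_def]
  have := Summable.le_tsum (summable_term hν hx) 0
    (fun j _ => mul_nonneg (c_pos hν j).le (Real.rpow_nonneg h2.le _))
  calc (x/2) ^ ν / Real.Gamma (ν + 1)
      = c ν 0 * (x/2) ^ (2*((0:ℕ):ℝ)+ν) := by
        unfold c; push_cast; norm_num; ring
    _ ≤ _ := this

lemma besselI_upper {ν : ℝ} (hν : 0 < ν) {x : ℝ} (hx : 0 < x) (hy : (x/2)^2 ≤ 1/2) :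
    besselI ν x ≤ (x/2) ^ ν * 2 / Real.Gamma (ν + 1) := by
  have h2 : (0:ℝ) < x/2 := by linarith
  have hΓ1 : 0 < Real.Gamma (ν + 1) := Real.Gamma_pos_of_pos (by linarith)
  set y : ℝ := (x/2)^2 with hy_def
  have hy0 : 0 ≤ y := sq_nonneg _
  have hy1 : y < 1 := by linarith
  set A : ℝ := (x/2) ^ ν with hA
  have hA0 : 0 < A := Real.rpow_pos_of_pos h2 ν
  have hsum2 : Summable (fun k : ℕ => y^k * (A / Real.Gamma (ν+1))) :=
    (summable_geometric_of_lt_one hy0 hy1).mul_right _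
  have hle : besselI ν x ≤ ∑' k : ℕ, y^k * (A / Real.Gamma (ν+1)) := by
    rw [besselI_def]
    apply Summable.tsum_le_tsum _ (summable_term hν hx) hsum2
    intro k
    rw [term_eq hx ν k]
    have hF : (1:ℝ) ≤ k.factorial := by exact_mod_cast k.factorial_pos
    have hΓk := gamma_pos hν k
    have hFk := gamma_factorial hν k
    have hc : c ν k ≤ 1 / Real.Gamma (ν+1) := by
      unfold c
      apply one_div_le_one_div_of_le hΓ1
      nlinarith
    calc c ν k * (y^k * A) ≤ (1/Real.Gamma (ν+1)) * (y^k * A) := by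
          apply mul_le_mul_of_nonneg_right hc (by positivity)
      _ = y^k * (A / Real.Gamma (ν+1)) := by ring
  have : ∑' k : ℕ, y^k * (A / Real.Gamma (ν+1)) = (1-y)⁻¹ * (A / Real.Gamma (ν+1)) := by
    rw [(summable_geometric_of_lt_one hy0 hy1).tsum_mul_right,
      tsum_geometric_of_lt_one hy0 hy1]
  rw [this] at hle
  have hinv : (1-y)⁻¹ ≤ 2 := by
    rw [inv_le_comm₀ (by linarith) (by norm_num)]
    linarith
  calc besselI ν x ≤ (1-y)⁻¹ * (A / Real.Gamma (ν+1)) := hle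
    _ ≤ 2 * (A / Real.Gamma (ν+1)) := by
        apply mul_le_mul_of_nonneg_right hinv (by positivity)
    _ = A * 2 / Real.Gamma (ν+1) := by ring

lemma hasDerivAt_term (ν : ℝ) (k : ℕ) {x : ℝ} (hx : 0 < x) :
    HasDerivAt (fun z : ℝ => c ν k * (z/2) ^ (2*(k:ℝ)+ν))
      (c ν k * (2*(k:ℝ)+ν) * (x/2) ^ (2*(k:ℝ)+ν) / x) x := by
  have h2 : (0:ℝ) < x/2 := by linarith
  have hdiv : HasDerivAt (fun z : ℝ => z/2) (1/2) x := by
    simpa using (hasDerivAt_id x).div_const 2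
  have hpow : HasDerivAt (fun w : ℝ => w ^ (2*(k:ℝ)+ν))
      ((2*(k:ℝ)+ν) * (x/2) ^ (2*(k:ℝ)+ν-1)) (x/2) :=
    Real.hasDerivAt_rpow_const (Or.inl h2.ne')
  have hcomp := (hpow.comp x hdiv).const_mul (c ν k)
  refine hcomp.congr_deriv ?_
  have h1 : (x/2) ^ (2*(k:ℝ)+ν-1) = (x/2) ^ (2*(k:ℝ)+ν) / (x/2) := by
    rw [Real.rpow_sub h2, Real.rpow_one]
  rw [h1]
  field_simp

lemma tsum_deriv_eq {ν : ℝ} (hν : 0 < ν) {m : ℝ} (hm : 0 < m) :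
    ∑' k : ℕ, c ν k * (2*(k:ℝ)+ν) * (m/2) ^ (2*(k:ℝ)+ν) / m
      = besselI (ν+1) m + ν/m * besselI ν m := by
  have h2 : (0:ℝ) < m/2 := by linarith
  set P : ℕ → ℝ := fun k => (m/2) ^ (2*(k:ℝ)+ν) with hP
  have hsumT : Summable (fun k : ℕ => c ν k * P k) := summable_term hν hm
  have hsumF : Summable (fun k : ℕ => c ν k * (2*(k:ℝ)+ν) * P k / m) := by
    apply Summable.congr (((summable_wy hν (by positivity : (0:ℝ) ≤ (m/2)^2)).mul_right
      ((m/2) ^ ν / m)))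
    intro k
    rw [hP]; simp only []
    rw [term_eq hm ν k]
    ring
  have hsumG2 : Summable (fun k : ℕ => (ν/m) * (c ν k * P k)) := hsumT.mul_left _
  have hsumG1 : Summable (fun k : ℕ => (2*(k:ℝ)/m) * (c ν k * P k)) := by
    apply Summable.congr (hsumF.sub hsumG2)
    intro k; ring
  have hsplit : ∀ k : ℕ, c ν k * (2*(k:ℝ)+ν) * P k / m
      = (2*(k:ℝ)/m) * (c ν k * P k) + (ν/m) * (c ν k * P k) := by
    intro k; ring
  rw [tsum_congr hsplit, Summable.tsum_add hsumG1 hsumG2]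
  congr 1
  · -- shifted sum equals besselI (ν+1) m
    rw [Summable.tsum_eq_zero_add hsumG1]
    have h0 : (2*((0:ℕ):ℝ)/m) * (c ν 0 * P 0) = 0 := by norm_num
    rw [h0, zero_add, besselI_def]
    apply tsum_congr
    intro k
    have harg : ν + ((k+1:ℕ):ℝ) + 1 = (ν+1) + (k:ℝ) + 1 := by push_cast; ring
    have hexp : 2*(((k+1:ℕ)):ℝ) + ν = (2*(k:ℝ) + (ν+1)) + 1 := by push_cast; ring
    have hfac : (((k+1:ℕ)).factorial : ℝ) = ((k:ℝ)+1) * k.factorial := by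
      push_cast [Nat.factorial_succ]; ring
    have hΓ : 0 < Real.Gamma ((ν+1) + k + 1) := gamma_pos (by linarith) k
    have hfp : (0:ℝ) < k.factorial := by exact_mod_cast k.factorial_pos
    rw [hP]; simp only []
    unfold c
    rw [harg, hexp, Real.rpow_add h2, Real.rpow_one, hfac]
    have hk1 : ((k:ℝ)+1) ≠ 0 := by positivity
    field_simp
    ring
    push_cast; ring
  · exact (Summable.tsum_mul_left _ hsumT).trans (by rw [besselI_def])

lemma recurrence {ν : ℝ} (hν : 0 < ν) {m : ℝ} (hm : 0 < m) :
    besselI ν m = besselI (ν+2) m + (2*(ν+1)/m) * besselI (ν+1) m := by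
  have h2 : (0:ℝ) < m/2 := by linarith
  set P : ℕ → ℝ := fun k => (m/2) ^ (2*(k:ℝ)+ν) with hP
  -- t2 k = (ν+1) * c (ν+1) k * P k  represents (2(ν+1)/m) * besselI (ν+1) term
  have hb1 : (2*(ν+1)/m) * besselI (ν+1) m = ∑' k : ℕ, (ν+1) * c (ν+1) k * P k := by
    rw [besselI_def, ← Summable.tsum_mul_left _ (summable_term (by linarith) hm)]
    apply tsum_congr
    intro k
    have hexp : 2*(k:ℝ) + (ν+1) = (2*(k:ℝ) + ν) + 1 := by ring
    rw [hexp, Real.rpow_add h2, Real.rpow_one, hP]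
    field_simp
  have hsumT : Summable (fun k : ℕ => c ν k * P k) := summable_term hν hm
  have hsumT2 : Summable (fun k : ℕ => (ν+1) * c (ν+1) k * P k) := by
    apply Summable.congr (((summable_cy (by linarith : (0:ℝ) < ν+1)
      (by positivity : (0:ℝ) ≤ (m/2)^2)).mul_left (ν+1)).mul_right ((m/2) ^ ν))
    intro k
    rw [hP]; simp only []
    rw [term_eq hm ν k]; ring
  have hsumU : Summable (fun k : ℕ => c ν k * P k - (ν+1) * c (ν+1) k * P k) :=
    hsumT.sub hsumT2
  have key : besselI ν m - (2*(ν+1)/m) * besselI (ν+1) m = besselI (ν+2) m := by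
    rw [hb1, besselI_def]
    have hTP : (∑' k:ℕ, c ν k * (m/2) ^ (2*(k:ℝ)+ν)) = ∑' k:ℕ, c ν k * P k := rfl
    rw [hTP, ← Summable.tsum_sub hsumT hsumT2]
    rw [Summable.tsum_eq_zero_add hsumU]
    have hΓ0 : Real.Gamma (ν + ((0:ℕ):ℝ) + 1) = Real.Gamma (ν+1) := by norm_num
    have hΓν1 : Real.Gamma ((ν+1) + ((0:ℕ):ℝ) + 1) = (ν+1) * Real.Gamma (ν+1) := by
      rw [show ((ν+1) + ((0:ℕ):ℝ) + 1) = (ν+1)+1 by push_cast; ring,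
        Real.Gamma_add_one (by positivity)]
    have h0 : c ν 0 * P 0 - (ν+1) * c (ν+1) 0 * P 0 = 0 := by
      unfold c
      rw [hΓ0, hΓν1]
      have hΓ1 : Real.Gamma (ν+1) ≠ 0 := (Real.Gamma_pos_of_pos (by linarith)).ne'
      field_simp
      ring
    rw [h0, zero_add, besselI_def]
    apply tsum_congr
    intro k
    -- shifted term identity
    have hargν : ν + ((k+1:ℕ):ℝ) + 1 = (ν + k + 1) + 1 := by push_cast; ring
    have harg1 : (ν+1) + ((k+1:ℕ):ℝ) + 1 = (ν + k + 2) + 1 := by push_cast; ring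
    have harg2 : (ν+2) + (k:ℝ) + 1 = (ν + k + 2) + 1 := by ring
    have hexp : 2*(((k+1:ℕ)):ℝ) + ν = (2*(k:ℝ) + (ν+2)) := by push_cast; ring
    have hfac : (((k+1:ℕ)).factorial : ℝ) = ((k:ℝ)+1) * k.factorial := by
      push_cast [Nat.factorial_succ]; ring
    have hG1 : Real.Gamma ((ν + k + 1) + 1) = (ν + k + 1) * Real.Gamma (ν + k + 1) :=
      Real.Gamma_add_one (by positivity)
    have hG2 : Real.Gamma ((ν + k + 2) + 1) = (ν + k + 2) * Real.Gamma (ν + k + 2) :=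
      Real.Gamma_add_one (by positivity)
    have hG3 : Real.Gamma (ν + k + 2) = (ν + k + 1) * Real.Gamma (ν + k + 1) := by
      rw [show (ν + (k:ℝ) + 2) = (ν + k + 1) + 1 by ring, hG1]
    have hΓk : 0 < Real.Gamma (ν + k + 1) := gamma_pos hν k
    have hfp : (0:ℝ) < k.factorial := by exact_mod_cast k.factorial_pos
    rw [hP]; simp only []
    unfold c
    rw [hargν, harg1, harg2, hexp, hfac, hG1, hG2, hG3]
    have hk1 : ((k:ℝ)+1) ≠ 0 := by positivity
    have hν1 : (ν + (k:ℝ) + 1) ≠ 0 := by positivity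
    have hν2 : (ν + (k:ℝ) + 2) ≠ 0 := by positivity
    field_simp
    ring
  linarith [key]

lemma besselI_hasDerivAt {ν : ℝ} (hν : 0 < ν) {m : ℝ} (hm : 0 < m) :
    HasDerivAt (besselI ν) (besselI (ν+1) m + ν/m * besselI ν m) m := by
  have h2 : (0:ℝ) < m/2 := by linarith
  set u : ℕ → ℝ := fun k => ((2*(k:ℝ)+ν) * c ν k * (m^2)^k) * ((m:ℝ)^ν * (2/m)) with hu
  have husum : Summable u := (summable_wy hν (by positivity : (0:ℝ) ≤ m^2)).mul_right _
  have hder : ∀ (k : ℕ) (y : ℝ), y ∈ Set.Ioo (m/2) (2*m) →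
      HasDerivAt (fun z : ℝ => c ν k * (z/2) ^ (2*(k:ℝ)+ν))
        (c ν k * (2*(k:ℝ)+ν) * (y/2) ^ (2*(k:ℝ)+ν) / y) y := by
    intro k y hy
    exact hasDerivAt_term ν k (by have := hy.1; linarith)
  have hbound : ∀ (k : ℕ) (y : ℝ), y ∈ Set.Ioo (m/2) (2*m) →
      ‖c ν k * (2*(k:ℝ)+ν) * (y/2) ^ (2*(k:ℝ)+ν) / y‖ ≤ u k := by
    intro k y hy
    obtain ⟨hy1, hy2⟩ := hy
    have hy0 : (0:ℝ) < y := by linarith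
    have hy20 : (0:ℝ) < y/2 := by linarith
    have hym : y/2 ≤ m := by linarith
    have hkν : (0:ℝ) ≤ 2*(k:ℝ)+ν := by
      have : (0:ℝ) ≤ (k:ℝ) := Nat.cast_nonneg k
      linarith
    have hval : (0:ℝ) ≤ c ν k * (2*(k:ℝ)+ν) * (y/2) ^ (2*(k:ℝ)+ν) / y := by
      apply div_nonneg _ hy0.le
      exact mul_nonneg (mul_nonneg (c_pos hν k).le hkν) (Real.rpow_nonneg hy20.le _)
    rw [Real.norm_eq_abs, abs_of_nonneg hval]
    rw [term_eq hy0 ν k, hu]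
    have h1 : ((y/2)^2)^k ≤ (m^2)^k := by
      apply pow_le_pow_left₀ (sq_nonneg _)
      nlinarith
    have h2' : (y/2) ^ ν ≤ (m:ℝ) ^ ν := Real.rpow_le_rpow hy20.le hym hν.le
    have h3 : 1/y ≤ 2/m := by
      rw [div_le_div_iff₀ hy0 hm]
      linarith
    have hQR : ((y/2)^2)^k * (y/2) ^ ν ≤ (m^2)^k * (m:ℝ)^ν :=
      mul_le_mul h1 h2' (Real.rpow_nonneg hy20.le _) (by positivity)
    calc c ν k * (2*(k:ℝ)+ν) * (((y/2)^2)^k * (y/2) ^ ν) / y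
        = (c ν k * (2*(k:ℝ)+ν)) * ((((y/2)^2)^k * (y/2) ^ ν) * (1/y)) := by ring
      _ ≤ (c ν k * (2*(k:ℝ)+ν)) * (((m^2)^k * (m:ℝ)^ν) * (2/m)) := by
          apply mul_le_mul_of_nonneg_left _ (mul_nonneg (c_pos hν k).le hkν)
          apply mul_le_mul hQR h3 (by positivity) (by positivity)
      _ = ((2*(k:ℝ)+ν) * c ν k * (m^2)^k) * ((m:ℝ)^ν * (2/m)) := by ring
  have hmem : m ∈ Set.Ioo (m/2) (2*m) := ⟨by linarith, by linarith⟩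
  have hs : Summable (fun k : ℕ => c ν k * (m/2) ^ (2*(k:ℝ)+ν)) := summable_term hν hm
  have H := hasDerivAt_tsum_of_isPreconnected husum isOpen_Ioo isPreconnected_Ioo
    hder hbound hmem hs hmem
  rw [← tsum_deriv_eq hν hm]
  exact H

lemma G_hasDerivAt {ν : ℝ} (hν : 0 < ν) {x : ℝ} (hx : 0 < x) :
    HasDerivAt (fun z : ℝ => Real.log (besselI ν z) - ν * Real.log z)
      (besselI (ν+1) x / besselI ν x) x := by
  have hI := besselI_pos hν hx
  have h1 := (besselI_hasDerivAt hν hx).log hI.ne'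
  have h2 := (Real.hasDerivAt_log hx.ne').const_mul ν
  have h3 := h1.sub h2
  refine h3.congr_deriv ?_
  have h4 : besselI ν x ≠ 0 := hI.ne'
  have h5 : x ≠ 0 := hx.ne'
  field_simp
  ring

lemma diff_pos {ν : ℝ} (hν : 0 < ν) {m : ℝ} (hm : 0 < m) :
    besselI (ν+1) m < besselI ν m := by
  have hg' : ∀ x : ℝ, 0 < x → HasDerivAt (fun z => besselI ν z - besselI (ν+1) z)
      ((besselI (ν+1) x + ν/x * besselI ν x) -
        (besselI (ν+2) x + (ν+1)/x * besselI (ν+1) x)) x := by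
    intro x hx
    have hA := besselI_hasDerivAt hν hx
    have hB := besselI_hasDerivAt (show (0:ℝ) < ν+1 by linarith) hx
    rw [show ν+1+1 = ν+2 by ring] at hB
    exact hA.sub hB
  have hh : ∀ x : ℝ, 0 < x →
      HasDerivAt (fun z => Real.exp z * (besselI ν z - besselI (ν+1) z))
      (Real.exp x * ((besselI ν x - besselI (ν+1) x) +
        ((besselI (ν+1) x + ν/x * besselI ν x) -
          (besselI (ν+2) x + (ν+1)/x * besselI (ν+1) x)))) x := by
    intro x hx
    have := (Real.hasDerivAt_exp x).mul (hg' x hx)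
    refine this.congr_deriv ?_
    ring
  have hpos : ∀ x : ℝ, 0 < x → 0 < Real.exp x * ((besselI ν x - besselI (ν+1) x) +
      ((besselI (ν+1) x + ν/x * besselI ν x) -
        (besselI (ν+2) x + (ν+1)/x * besselI (ν+1) x))) := by
    intro x hx
    have hrec := recurrence hν hx
    have hI0 := besselI_pos hν hx
    have hI1 := besselI_pos (show (0:ℝ) < ν+1 by linarith) hx
    have hkey : (besselI ν x - besselI (ν+1) x) +
        ((besselI (ν+1) x + ν/x * besselI ν x) -
          (besselI (ν+2) x + (ν+1)/x * besselI (ν+1) x))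
        = ν/x * besselI ν x + (ν+1)/x * besselI (ν+1) x := by
      linear_combination hrec
    rw [hkey]
    apply mul_pos (Real.exp_pos x)
    have t1 : 0 < ν/x * besselI ν x := mul_pos (div_pos hν hx) hI0
    have t2 : 0 < (ν+1)/x * besselI (ν+1) x := mul_pos (div_pos (by linarith) hx) hI1
    linarith
  have hmono : StrictMonoOn (fun z => Real.exp z * (besselI ν z - besselI (ν+1) z))
      (Set.Ioi (0:ℝ)) := by
    apply strictMonoOn_of_deriv_pos (convex_Ioi 0)
    · intro x hx
      exact (hh x (Set.mem_Ioi.mp hx)).continuousAt.continuousWithinAt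
    · intro x hx
      rw [interior_Ioi] at hx
      rw [(hh x (Set.mem_Ioi.mp hx)).deriv]
      exact hpos x (Set.mem_Ioi.mp hx)
  set x0 : ℝ := min m 1 / 2 with hx0
  have hmin : 0 < min m 1 := lt_min hm one_pos
  have hminm : min m 1 ≤ m := min_le_left _ _
  have hmin1 : min m 1 ≤ 1 := min_le_right _ _
  have hx0pos : 0 < x0 := by rw [hx0]; linarith
  have hx0m : x0 < m := by rw [hx0]; linarith
  have hx0le : x0 ≤ 1/2 := by rw [hx0]; linarith
  have hgx0 : 0 < besselI ν x0 - besselI (ν+1) x0 := by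
    have hlow := besselI_lower hν hx0pos
    have hy : (x0/2)^2 ≤ 1/2 := by nlinarith
    have hup := besselI_upper (show (0:ℝ) < ν+1 by linarith) hx0pos hy
    have hΓ1 : 0 < Real.Gamma (ν+1) := Real.Gamma_pos_of_pos (by linarith)
    have hΓ2 : Real.Gamma ((ν+1)+1) = (ν+1) * Real.Gamma (ν+1) :=
      Real.Gamma_add_one (by positivity)
    have hP : 0 < (x0/2) ^ ν := Real.rpow_pos_of_pos (by linarith) ν
    have hsplit : (x0/2) ^ (ν+1) = (x0/2) ^ ν * (x0/2) :=
      Real.rpow_add_one (by positivity) ν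
    have hmid : (x0/2) ^ (ν+1) * 2 / Real.Gamma ((ν+1)+1)
        < (x0/2) ^ ν / Real.Gamma (ν+1) := by
      rw [hsplit, hΓ2, div_lt_div_iff₀ (by positivity) hΓ1]
      have hx0lt : (x0/2) * 2 < ν+1 := by linarith
      calc (x0/2) ^ ν * (x0/2) * 2 * Real.Gamma (ν+1)
          = (x0/2) ^ ν * ((x0/2) * 2 * Real.Gamma (ν+1)) := by ring
        _ < (x0/2) ^ ν * ((ν+1) * Real.Gamma (ν+1)) :=
            mul_lt_mul_of_pos_left (mul_lt_mul_of_pos_right hx0lt hΓ1) hP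
    linarith
  have h1 : 0 < Real.exp x0 * (besselI ν x0 - besselI (ν+1) x0) :=
    mul_pos (Real.exp_pos _) hgx0
  have h2 := hmono (Set.mem_Ioi.mpr hx0pos) (Set.mem_Ioi.mpr hm) hx0m
  have h3 : 0 < Real.exp m * (besselI ν m - besselI (ν+1) m) := lt_trans h1 h2
  rcases mul_pos_iff.mp h3 with ⟨_, hD⟩ | ⟨hE, _⟩
  · linarith
  · linarith [Real.exp_pos m]

end BesselProof

open BesselProof

theorem bessel_log_deriv (ν : ℝ) (hν : 0 < ν) (m : ℝ) (hm : 0 < m) :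
    HasDerivAt (fun x : ℝ => Real.log (besselI ν x) - ν * Real.log x)
      (besselI (ν + 1) m / besselI ν m) m ∧
    0 < besselI (ν + 1) m / besselI ν m ∧
    besselI (ν + 1) m / besselI ν m < 1 ∧
    StrictMonoOn (fun x : ℝ => Real.log (besselI ν x) - ν * Real.log x) (Set.Ioi 0) := by
  refine ⟨G_hasDerivAt hν hm, ?_, ?_, ?_⟩
  · exact div_pos (besselI_pos (by linarith) hm) (besselI_pos hν hm)
  · rw [div_lt_one (besselI_pos hν hm)]
    exact diff_pos hν hm
  · apply strictMonoOn_of_deriv_pos (convex_Ioi 0)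
    · intro x hx
      exact (G_hasDerivAt hν (Set.mem_Ioi.mp hx)).continuousAt.continuousWithinAt
    · intro x hx
      rw [interior_Ioi] at hx
      rw [(G_hasDerivAt hν (Set.mem_Ioi.mp hx)).deriv]
      exact div_pos (besselI_pos (by linarith) (Set.mem_Ioi.mp hx))
        (besselI_pos hν (Set.mem_Ioi.mp hx))
end

section
/- For every ν > 0, the function H(m) = I_{ν+1}(m)/(m·I_ν(m)) is strictly decreasing on (0, ∞). -/
open Real Filter

namespace BesselAux

noncomputable def c (ν : ℝ) (k : ℕ) : ℝ :=
  1 / ((Nat.factorial k : ℝ) * Real.Gamma (ν + k + 1))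

lemma c_pos {ν : ℝ} (hν : 0 < ν) (k : ℕ) : 0 < c ν k := by
  have h1 : (0:ℝ) < Nat.factorial k := by exact_mod_cast k.factorial_pos
  have h2 : (0:ℝ) < ν + k + 1 := by
    have : (0:ℝ) ≤ k := Nat.cast_nonneg k
    linarith
  exact div_pos one_pos (mul_pos h1 (Real.Gamma_pos_of_pos h2))

lemma c_shift {ν : ℝ} (hν : 0 < ν) (k : ℕ) :
    c (ν + 1) k = c ν k / (ν + k + 1) := by
  have h2 : (0:ℝ) < ν + k + 1 := by
    have : (0:ℝ) ≤ k := Nat.cast_nonneg k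
    linarith
  have hfac : (Nat.factorial k : ℝ) ≠ 0 := by exact_mod_cast k.factorial_ne_zero
  have hG : Real.Gamma (ν + k + 1) ≠ 0 := (Real.Gamma_pos_of_pos h2).ne'
  unfold c
  rw [show ν + 1 + (k:ℝ) + 1 = (ν + k + 1) + 1 by ring, Real.Gamma_add_one h2.ne']
  field_simp

lemma c_succ {ν : ℝ} (hν : 0 < ν) (k : ℕ) :
    c ν (k + 1) = c ν k / (((k:ℝ) + 1) * (ν + k + 1)) := by
  have h2 : (0:ℝ) < ν + k + 1 := by
    have : (0:ℝ) ≤ k := Nat.cast_nonneg k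
    linarith
  have hfac : (Nat.factorial k : ℝ) ≠ 0 := by exact_mod_cast k.factorial_ne_zero
  have hG : Real.Gamma (ν + k + 1) ≠ 0 := (Real.Gamma_pos_of_pos h2).ne'
  unfold c
  rw [show ν + ((k:ℕ)+1 : ℕ) + 1 = (ν + k + 1) + 1 by push_cast; ring,
    Real.Gamma_add_one h2.ne', Nat.factorial_succ]
  push_cast
  field_simp

lemma summable_c {ν : ℝ} (hν : 0 < ν) {x : ℝ} (hx : 0 < x) :
    Summable (fun k : ℕ => c ν k * x ^ k) := by
  apply summable_of_ratio_test_tendsto_lt_one one_pos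
  · filter_upwards with k
    exact (mul_pos (c_pos hν k) (pow_pos hx k)).ne'
  · have hratio : ∀ k : ℕ,
        ‖c ν (k+1) * x ^ (k+1)‖ / ‖c ν k * x ^ k‖ = x / (((k:ℝ) + 1) * (ν + k + 1)) := by
      intro k
      have h2 : (0:ℝ) < ν + k + 1 := by
        have : (0:ℝ) ≤ k := Nat.cast_nonneg k
        linarith
      have hk1 : (0:ℝ) < (k:ℝ) + 1 := by positivity
      rw [Real.norm_eq_abs, Real.norm_eq_abs,
        abs_of_pos (mul_pos (c_pos hν (k+1)) (pow_pos hx (k+1))),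
        abs_of_pos (mul_pos (c_pos hν k) (pow_pos hx k)), c_succ hν k, pow_succ]
      have hc : c ν k ≠ 0 := (c_pos hν k).ne'
      have hp : x ^ k ≠ 0 := (pow_pos hx k).ne'
      field_simp
    simp only [hratio]
    have hlim : Tendsto (fun k : ℕ => x / ((k:ℝ) + 1)) atTop (nhds 0) := by
      have := tendsto_const_div_atTop_nhds_zero_nat x
      have h2 := this.comp (tendsto_add_atTop_nat 1)
      refine h2.congr fun k => ?_
      simp only [Function.comp_apply]
      push_cast
      ring
    apply squeeze_zero (fun k => by positivity) _ hlim
    intro k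
    have h2 : (1:ℝ) ≤ ν + k + 1 := by
      have : (0:ℝ) ≤ k := Nat.cast_nonneg k
      linarith
    have hk1 : (0:ℝ) < (k:ℝ) + 1 := by positivity
    have hb : (k:ℝ) + 1 ≤ ((k:ℝ) + 1) * (ν + k + 1) := by nlinarith
    exact div_le_div_of_nonneg_left hx.le hk1 hb

lemma f_pos {ν : ℝ} (hν : 0 < ν) {x : ℝ} (hx : 0 < x) :
    0 < ∑' k : ℕ, c ν k * x ^ k :=
  Summable.tsum_pos (summable_c hν hx) (fun k => (mul_pos (c_pos hν k) (pow_pos hx k)).le) 0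
    (mul_pos (c_pos hν 0) (pow_pos hx 0))

/-- The symmetrized difference term. -/
noncomputable def D (ν u v : ℝ) (p : ℕ × ℕ) : ℝ :=
  c (ν+1) p.1 * u ^ p.1 * (c ν p.2 * v ^ p.2) - c (ν+1) p.1 * v ^ p.1 * (c ν p.2 * u ^ p.2)

lemma D_eq {ν u v : ℝ} (hν : 0 < ν) (j k : ℕ) :
    D ν u v (j, k) + D ν u v (k, j) =
      c ν j * c ν k * ((u ^ j * v ^ k - v ^ j * u ^ k)
        * (1 / (ν + j + 1) - 1 / (ν + k + 1))) := by
  have hdj : (0:ℝ) < ν + j + 1 := by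
    have : (0:ℝ) ≤ j := Nat.cast_nonneg j
    linarith
  have hdk : (0:ℝ) < ν + k + 1 := by
    have : (0:ℝ) ≤ k := Nat.cast_nonneg k
    linarith
  simp only [D, c_shift hν]
  field_simp
  ring

lemma pow_cross {u v : ℝ} (hu : 0 < u) (huv : u ≤ v) {j k : ℕ} (hjk : j ≤ k) :
    v ^ j * u ^ k ≤ u ^ j * v ^ k := by
  obtain ⟨d, rfl⟩ : ∃ d, k = j + d := ⟨k - j, (Nat.add_sub_cancel' hjk).symm⟩
  have hv : 0 < v := lt_of_lt_of_le hu huv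
  have hd : u ^ d ≤ v ^ d := pow_le_pow_left₀ hu.le huv d
  have hjj : 0 < u ^ j * v ^ j := mul_pos (pow_pos hu j) (pow_pos hv j)
  calc v ^ j * u ^ (j + d) = (u ^ j * v ^ j) * u ^ d := by rw [pow_add]; ring
    _ ≤ (u ^ j * v ^ j) * v ^ d := by nlinarith
    _ = u ^ j * v ^ (j + d) := by rw [pow_add]; ring

lemma E_nonneg {ν u v : ℝ} (hν : 0 < ν) (hu : 0 < u) (huv : u < v) (p : ℕ × ℕ) :
    0 ≤ D ν u v p + D ν u v p.swap := by
  obtain ⟨j, k⟩ := p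
  have main : ∀ j k : ℕ, j ≤ k → 0 ≤ D ν u v (j, k) + D ν u v (k, j) := by
    intro j k hjk
    rw [D_eq hν]
    have hdj : (0:ℝ) < ν + j + 1 := by
      have : (0:ℝ) ≤ j := Nat.cast_nonneg j; linarith
    have hdk : (0:ℝ) < ν + k + 1 := by
      have : (0:ℝ) ≤ k := Nat.cast_nonneg k; linarith
    have h1 : 0 ≤ u ^ j * v ^ k - v ^ j * u ^ k :=
      sub_nonneg.mpr (pow_cross hu huv.le hjk)
    have h2 : 0 ≤ 1 / (ν + j + 1) - 1 / (ν + k + 1) := by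
      have hc : (ν + j + 1) ≤ (ν + k + 1) := by
        have : (j:ℝ) ≤ k := Nat.cast_le.mpr hjk; linarith
      have := one_div_le_one_div_of_le hdj hc
      linarith
    exact mul_nonneg (mul_nonneg (c_pos hν j).le (c_pos hν k).le) (mul_nonneg h1 h2)
  rcases le_total j k with h | h
  · exact main j k h
  · simpa [add_comm] using main k j h

lemma E_pos_zero_one {ν u v : ℝ} (hν : 0 < ν) (hu : 0 < u) (huv : u < v) :
    0 < D ν u v (0, 1) + D ν u v (1, 0) := by
  rw [D_eq hν]
  have hd1 : (0:ℝ) < ν + 0 + 1 := by linarith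
  have hd2 : (0:ℝ) < ν + 1 + 1 := by linarith
  have h1 : (0:ℝ) < u ^ 0 * v ^ 1 - v ^ 0 * u ^ 1 := by
    simp only [pow_zero, pow_one, one_mul]
    linarith
  have h2 : (0:ℝ) < 1 / (ν + (0:ℕ) + 1) - 1 / (ν + (1:ℕ) + 1) := by
    push_cast
    have := one_div_lt_one_div_of_lt hd1 (by linarith : ν + 0 + 1 < ν + 1 + 1)
    linarith
  exact mul_pos (mul_pos (c_pos hν 0) (c_pos hν 1)) (mul_pos h1 h2)

set_option maxHeartbeats 1000000 in
lemma key {ν u v : ℝ} (hν : 0 < ν) (hu : 0 < u) (huv : u < v) :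
    (∑' j : ℕ, c (ν+1) j * v ^ j) * (∑' k : ℕ, c ν k * u ^ k)
      < (∑' j : ℕ, c (ν+1) j * u ^ j) * (∑' k : ℕ, c ν k * v ^ k) := by
  have hv : 0 < v := lt_trans hu huv
  have hν1 : 0 < ν + 1 := by linarith
  have SAu := summable_c hν1 hu
  have SAv := summable_c hν1 hv
  have SBu := summable_c hν hu
  have SBv := summable_c hν hv
  have nonnegA : ∀ x : ℝ, 0 < x → ∀ j : ℕ, 0 ≤ c (ν+1) j * x ^ j := fun x hx j =>
    (mul_pos (c_pos hν1 j) (pow_pos hx j)).le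
  have nonnegB : ∀ x : ℝ, 0 < x → ∀ j : ℕ, 0 ≤ c ν j * x ^ j := fun x hx j =>
    (mul_pos (c_pos hν j) (pow_pos hx j)).le
  have P1 : Summable (fun p : ℕ × ℕ => (c (ν+1) p.1 * v ^ p.1) * (c ν p.2 * u ^ p.2)) :=
    SAv.mul_of_nonneg SBu (nonnegA v hv) (nonnegB u hu)
  have P2 : Summable (fun p : ℕ × ℕ => (c (ν+1) p.1 * u ^ p.1) * (c ν p.2 * v ^ p.2)) :=
    SAu.mul_of_nonneg SBv (nonnegA u hu) (nonnegB v hv)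
  rw [Summable.tsum_mul_tsum SAv SBu P1, Summable.tsum_mul_tsum SAu SBv P2, ← sub_pos,
    ← Summable.tsum_sub P2 P1]
  have hD : Summable (D ν u v) := P2.sub P1
  have hswapsum : Summable (fun p : ℕ × ℕ => D ν u v p.swap) :=
    ((Equiv.prodComm ℕ ℕ).summable_iff).mpr hD
  have hswap : ∑' p : ℕ × ℕ, D ν u v p.swap = ∑' p : ℕ × ℕ, D ν u v p :=
    (Equiv.prodComm ℕ ℕ).tsum_eq (D ν u v)
  have hE : 0 < ∑' p : ℕ × ℕ, (D ν u v p + D ν u v p.swap) :=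
    Summable.tsum_pos (hD.add hswapsum) (E_nonneg hν hu huv) (0, 1) (E_pos_zero_one hν hu huv)
  rw [Summable.tsum_add hD hswapsum, hswap] at hE
  have hpos : (0:ℝ) < ∑' p : ℕ × ℕ, D ν u v p := by linarith
  exact hpos

lemma besselI_eq {ν : ℝ} {m : ℝ} (hm : 0 < m) :
    besselI ν m = (m / 2) ^ ν * ∑' k : ℕ, c ν k * (m ^ 2 / 4) ^ k := by
  have hm2 : (0:ℝ) < m / 2 := by linarith
  have : besselI ν m = ∑' k : ℕ, c ν k * (m / 2) ^ (2 * (k:ℝ) + ν) := rfl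
  rw [this, ← tsum_mul_left]
  apply tsum_congr
  intro k
  have h1 : (m / 2 : ℝ) ^ (2 * (k:ℝ) + ν) = (m ^ 2 / 4) ^ k * (m / 2) ^ ν := by
    rw [Real.rpow_add hm2]
    congr 1
    rw [show (2 * (k:ℝ)) = ((2 * k : ℕ) : ℝ) by push_cast; ring, Real.rpow_natCast,
      pow_mul]
    congr 1
    ring
  rw [h1]
  ring

end BesselAux

theorem besselI_ratio_div_strictAnti (ν : ℝ) (hν : 0 < ν) :
    StrictAntiOn (fun m : ℝ => besselI (ν + 1) m / (m * besselI ν m)) (Set.Ioi 0) := by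
  intro x hx y hy hxy
  simp only [Set.mem_Ioi] at hx hy
  dsimp only
  have hν1 : 0 < ν + 1 := by linarith
  have hratio : ∀ m : ℝ, 0 < m →
      besselI (ν + 1) m / (m * besselI ν m)
        = (∑' j : ℕ, BesselAux.c (ν+1) j * (m ^ 2 / 4) ^ j)
          / (2 * ∑' k : ℕ, BesselAux.c ν k * (m ^ 2 / 4) ^ k) := by
    intro m hm
    have hm2 : (0:ℝ) < m / 2 := by linarith
    have hu : (0:ℝ) < m ^ 2 / 4 := by positivity
    have hS : (0:ℝ) < ∑' k : ℕ, BesselAux.c ν k * (m ^ 2 / 4) ^ k :=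
      BesselAux.f_pos hν hu
    have hpow : (0:ℝ) < (m / 2) ^ ν := Real.rpow_pos_of_pos hm2 ν
    rw [BesselAux.besselI_eq hm, BesselAux.besselI_eq hm, Real.rpow_add hm2,
      Real.rpow_one]
    generalize (∑' j : ℕ, BesselAux.c (ν+1) j * (m ^ 2 / 4) ^ j) = S1
    generalize hg : (∑' k : ℕ, BesselAux.c ν k * (m ^ 2 / 4) ^ k) = S2 at hS ⊢
    field_simp
  rw [hratio x hx, hratio y hy]
  have hu : (0:ℝ) < x ^ 2 / 4 := by positivity
  have huv : x ^ 2 / 4 < y ^ 2 / 4 := by nlinarith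
  have hSx : (0:ℝ) < ∑' k : ℕ, BesselAux.c ν k * (x ^ 2 / 4) ^ k :=
    BesselAux.f_pos hν hu
  have hSy : (0:ℝ) < ∑' k : ℕ, BesselAux.c ν k * (y ^ 2 / 4) ^ k :=
    BesselAux.f_pos hν (by positivity)
  rw [div_lt_div_iff₀ (by linarith) (by linarith)]
  have hk := BesselAux.key hν hu huv
  generalize (∑' j : ℕ, BesselAux.c (ν+1) j * (x ^ 2 / 4) ^ j) = A1 at hk ⊢
  generalize (∑' j : ℕ, BesselAux.c (ν+1) j * (y ^ 2 / 4) ^ j) = A2 at hk ⊢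
  generalize (∑' k : ℕ, BesselAux.c ν k * (x ^ 2 / 4) ^ k) = B1 at hk hSx ⊢
  generalize (∑' k : ℕ, BesselAux.c ν k * (y ^ 2 / 4) ^ k) = B2 at hk hSy ⊢
  nlinarith
end

section
/- For every ν > 0 and every m > 0, the Turán-type inequality I_{ν+2}(m)·I_ν(m) < I_{ν+1}(m)² holds. -/
open Finset

/-- terms of the Bessel series with `q = (m/2)^2` -/
noncomputable def bT (ν q : ℝ) (k : ℕ) : ℝ :=
  q ^ k / (k.factorial * Real.Gamma (ν + k + 1))

noncomputable def cA2 (ν : ℝ) (i j : ℕ) : ℝ :=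
  1 / (i.factorial * j.factorial * Real.Gamma (ν + i + 2) * Real.Gamma (ν + j + 2))

noncomputable def cB2 (ν : ℝ) (i j : ℕ) : ℝ :=
  1 / (i.factorial * j.factorial * Real.Gamma (ν + i + 3) * Real.Gamma (ν + j + 1))

noncomputable def cH2 (ν : ℝ) (i j : ℕ) : ℝ :=
  1 / (i.factorial * j.factorial * Real.Gamma (ν + i + 3) * Real.Gamma (ν + j + 2))

lemma Gpos {ν : ℝ} (hν : 0 < ν) (k : ℕ) (c : ℝ) (hc : 0 ≤ c) :
    0 < Real.Gamma (ν + k + c) :=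
  Real.Gamma_pos_of_pos (by have hk : (0:ℝ) ≤ k := Nat.cast_nonneg k; linarith)

lemma bG_ge {ν : ℝ} (hν : 0 < ν) (k : ℕ) :
    (k.factorial : ℝ) * Real.Gamma (ν + 1) ≤ Real.Gamma (ν + k + 1) := by
  induction k with
  | zero => simp
  | succ k ih =>
    have hk : (0:ℝ) ≤ k := Nat.cast_nonneg k
    have harg : (ν + ↑(k+1) + 1 : ℝ) = (ν + ↑k + 1) + 1 := by push_cast; ring
    have hpos : (0:ℝ) < ν + ↑k + 1 := by linarith
    rw [harg, Real.Gamma_add_one hpos.ne']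
    have hG : 0 < Real.Gamma (ν + ↑k + 1) := Real.Gamma_pos_of_pos hpos
    have hGν : 0 < Real.Gamma (ν + 1) := Real.Gamma_pos_of_pos (by linarith)
    have hfac : ((k+1).factorial : ℝ) = (k+1) * k.factorial := by
      rw [Nat.factorial_succ]; push_cast; ring
    rw [hfac]
    nlinarith [Nat.one_le_iff_ne_zero.mpr (Nat.factorial_ne_zero k),
      (Nat.cast_le (α := ℝ)).mpr (Nat.one_le_iff_ne_zero.mpr (Nat.factorial_ne_zero k))]

lemma bT_nonneg {ν : ℝ} (hν : 0 < ν) {q : ℝ} (hq : 0 ≤ q) (k : ℕ) : 0 ≤ bT ν q k := by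
  have hG := Gpos hν k 1 one_pos.le
  have hf : (0:ℝ) < k.factorial := by exact_mod_cast k.factorial_pos
  exact div_nonneg (pow_nonneg hq k) (by positivity)

lemma bT_summable {ν : ℝ} (hν : 0 < ν) {q : ℝ} (hq : 0 ≤ q) : Summable (bT ν q) := by
  have hGν : 0 < Real.Gamma (ν + 1) := Real.Gamma_pos_of_pos (by linarith)
  apply Summable.of_nonneg_of_le (bT_nonneg hν hq)
    (f := fun k => (1 / Real.Gamma (ν + 1)) * (q ^ k / k.factorial))
  · intro k
    have hG1 := Gpos hν k 1 one_pos.le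
    have hle : Real.Gamma (ν + 1) ≤ Real.Gamma (ν + ↑k + 1) := by
      have h1 : (1:ℝ) ≤ k.factorial := by exact_mod_cast k.factorial_pos
      nlinarith [bG_ge hν k]
    have hf : (0:ℝ) < k.factorial := by exact_mod_cast k.factorial_pos
    calc bT ν q k = q ^ k / (k.factorial * Real.Gamma (ν + k + 1)) := rfl
      _ ≤ q ^ k / (k.factorial * Real.Gamma (ν + 1)) := by
          apply div_le_div_of_nonneg_left (pow_nonneg hq k) (by positivity)
          nlinarith
      _ = (1 / Real.Gamma (ν + 1)) * (q ^ k / k.factorial) := by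
          rw [div_mul_div_comm, one_mul]; ring
  · exact (Real.summable_pow_div_factorial q).mul_left _

lemma bT_norm_summable {ν : ℝ} (hν : 0 < ν) {q : ℝ} (hq : 0 ≤ q) :
    Summable fun k => ‖bT ν q k‖ :=
  (bT_summable hν hq).congr fun k => (Real.norm_of_nonneg (bT_nonneg hν hq k)).symm

lemma Gstep {x : ℝ} (hx : 0 < x) : Real.Gamma (x + 1) = x * Real.Gamma x :=
  Real.Gamma_add_one hx.ne'

/-- `cA2 - cB2 = (i - j + 1) * cH2` -/
lemma coeff_diff {ν : ℝ} (hν : 0 < ν) (i j : ℕ) :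
    cA2 ν i j - cB2 ν i j = ((i:ℝ) - (j:ℝ) + 1) * cH2 ν i j := by
  have hi : (0:ℝ) ≤ i := Nat.cast_nonneg i
  have hj : (0:ℝ) ≤ j := Nat.cast_nonneg j
  have hGi : 0 < Real.Gamma (ν + i + 2) := Gpos hν i 2 (by norm_num)
  have hGj : 0 < Real.Gamma (ν + j + 1) := Gpos hν j 1 (by norm_num)
  have e1 : Real.Gamma (ν + i + 3) = (ν + i + 2) * Real.Gamma (ν + i + 2) := by
    rw [show (ν + (i:ℝ) + 3) = (ν + i + 2) + 1 by ring, Gstep (by linarith)]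
  have e2 : Real.Gamma (ν + j + 2) = (ν + j + 1) * Real.Gamma (ν + j + 1) := by
    rw [show (ν + (j:ℝ) + 2) = (ν + j + 1) + 1 by ring, Gstep (by linarith)]
  have hfi : (0:ℝ) < i.factorial := by exact_mod_cast i.factorial_pos
  have hfj : (0:ℝ) < j.factorial := by exact_mod_cast j.factorial_pos
  rw [cA2, cB2, cH2, e1, e2]
  field_simp
  ring

lemma cH2_nonneg {ν : ℝ} (hν : 0 < ν) (i j : ℕ) : 0 ≤ cH2 ν i j := by
  have hGi : 0 < Real.Gamma (ν + i + 3) := Gpos hν i 3 (by norm_num)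
  have hGj : 0 < Real.Gamma (ν + j + 2) := Gpos hν j 2 (by norm_num)
  have hfi : (0:ℝ) < i.factorial := by exact_mod_cast i.factorial_pos
  have hfj : (0:ℝ) < j.factorial := by exact_mod_cast j.factorial_pos
  rw [cH2]; positivity

lemma cH2_mono {ν : ℝ} (hν : 0 < ν) {i j : ℕ} (h : j ≤ i) :
    cH2 ν j (i+1) ≤ cH2 ν i (j+1) := by
  have hGi : 0 < Real.Gamma (ν + i + 3) := Gpos hν i 3 (by norm_num)
  have hGj : 0 < Real.Gamma (ν + j + 3) := Gpos hν j 3 (by norm_num)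
  have hfi : (0:ℝ) < i.factorial := by exact_mod_cast i.factorial_pos
  have hfj : (0:ℝ) < j.factorial := by exact_mod_cast j.factorial_pos
  have ei : Real.Gamma (ν + ↑(i+1) + 2) = Real.Gamma (ν + i + 3) := by
    congr 1; push_cast; ring
  have ej : Real.Gamma (ν + ↑(j+1) + 2) = Real.Gamma (ν + j + 3) := by
    congr 1; push_cast; ring
  rw [cH2, cH2, ei, ej]
  have hfact : (i.factorial * (j+1).factorial : ℕ) ≤ (j.factorial * (i+1).factorial : ℕ) := by
    rw [Nat.factorial_succ, Nat.factorial_succ]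
    calc i.factorial * ((j+1) * j.factorial) = (j+1) * (i.factorial * j.factorial) := by ring
      _ ≤ (i+1) * (i.factorial * j.factorial) :=
          Nat.mul_le_mul_right _ (by omega)
      _ = j.factorial * ((i+1) * i.factorial) := by ring
  have hfactR : (i.factorial : ℝ) * (j+1).factorial ≤ (j.factorial : ℝ) * (i+1).factorial := by
    exact_mod_cast hfact
  have hfj1 : (0:ℝ) < (j+1).factorial := by exact_mod_cast (j+1).factorial_pos
  apply one_div_le_one_div_of_le
  · positivity
  · nlinarith [mul_pos hGi hGj, mul_le_mul_of_nonneg_right hfactR (mul_pos hGi hGj).le]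

lemma pair_nonneg {ν : ℝ} (hν : 0 < ν) (i j : ℕ) :
    0 ≤ ((i:ℝ) - j) * cH2 ν i (j+1) + ((j:ℝ) - i) * cH2 ν j (i+1) := by
  rcases le_total j i with h | h
  · have hij : (0:ℝ) ≤ (i:ℝ) - j := by
      have : (j:ℝ) ≤ i := Nat.cast_le.mpr h
      linarith
    nlinarith [cH2_mono hν h]
  · have hij : (0:ℝ) ≤ (j:ℝ) - i := by
      have : (i:ℝ) ≤ j := Nat.cast_le.mpr h
      linarith
    nlinarith [cH2_mono hν h]

lemma reflect_nonneg (f : ℕ → ℝ) (n : ℕ) (h : ∀ k ∈ range n, 0 ≤ f k + f (n - 1 - k)) :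
    0 ≤ ∑ k ∈ range n, f k := by
  have hre := Finset.sum_range_reflect f n
  have hsum := Finset.sum_nonneg h
  rw [Finset.sum_add_distrib, hre] at hsum
  linarith

lemma sum_coeff_nonneg {ν : ℝ} (hν : 0 < ν) (n : ℕ) :
    0 ≤ ∑ k ∈ range (n+1), (((k:ℝ) - ((n-k : ℕ):ℝ) + 1) * cH2 ν k (n-k)) := by
  rw [Finset.sum_range_succ]
  have hlast : 0 ≤ ((n:ℝ) - ((n-n : ℕ):ℝ) + 1) * cH2 ν n (n-n) := by
    simp only [Nat.sub_self, Nat.cast_zero]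
    have h1 : (0:ℝ) ≤ n := Nat.cast_nonneg n
    exact mul_nonneg (by linarith) (cH2_nonneg hν n 0)
  have hS : 0 ≤ ∑ k ∈ range n, (((k:ℝ) - ((n-k : ℕ):ℝ) + 1) * cH2 ν k (n-k)) := by
    apply reflect_nonneg
    intro k hk
    have hkn : k < n := Finset.mem_range.mp hk
    set j := n - 1 - k with hj
    rw [show n - k = j + 1 by omega, show n - j = k + 1 by omega]
    refine le_trans (pair_nonneg hν k j) (le_of_eq ?_)
    push_cast
    ring
  linarith

lemma prod_eq_A {ν : ℝ} (q : ℝ) (n k : ℕ) (hk : k ≤ n) :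
    bT (ν+1) q k * bT (ν+1) q (n-k) = q ^ n * cA2 ν k (n-k) := by
  rw [bT, bT, cA2, div_mul_div_comm, ← pow_add, show k + (n-k) = n by omega]
  rw [show ν + 1 + (k:ℝ) + 1 = ν + k + 2 by ring,
    show ν + 1 + ((n-k : ℕ):ℝ) + 1 = ν + ((n-k : ℕ):ℝ) + 2 by ring, mul_one_div]
  congr 1
  ring

lemma prod_eq_B {ν : ℝ} (q : ℝ) (n k : ℕ) (hk : k ≤ n) :
    bT (ν+2) q k * bT ν q (n-k) = q ^ n * cB2 ν k (n-k) := by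
  rw [bT, bT, cB2, div_mul_div_comm, ← pow_add, show k + (n-k) = n by omega]
  rw [show ν + 2 + (k:ℝ) + 1 = ν + k + 3 by ring, mul_one_div]
  congr 1
  ring

lemma cauchy_le {ν q : ℝ} (hν : 0 < ν) (hq : 0 ≤ q) (n : ℕ) :
    ∑ k ∈ range (n+1), bT (ν+2) q k * bT ν q (n-k) ≤
      ∑ k ∈ range (n+1), bT (ν+1) q k * bT (ν+1) q (n-k) := by
  have hA : ∑ k ∈ range (n+1), bT (ν+1) q k * bT (ν+1) q (n-k)
      = q ^ n * ∑ k ∈ range (n+1), cA2 ν k (n-k) := by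
    rw [Finset.mul_sum]
    exact Finset.sum_congr rfl fun k hk =>
      prod_eq_A q n k (Nat.lt_succ_iff.mp (Finset.mem_range.mp hk))
  have hB : ∑ k ∈ range (n+1), bT (ν+2) q k * bT ν q (n-k)
      = q ^ n * ∑ k ∈ range (n+1), cB2 ν k (n-k) := by
    rw [Finset.mul_sum]
    exact Finset.sum_congr rfl fun k hk =>
      prod_eq_B q n k (Nat.lt_succ_iff.mp (Finset.mem_range.mp hk))
  rw [hA, hB]
  apply mul_le_mul_of_nonneg_left ?_ (pow_nonneg hq n)
  have hdiff : ∑ k ∈ range (n+1), cA2 ν k (n-k) - ∑ k ∈ range (n+1), cB2 ν k (n-k)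
      = ∑ k ∈ range (n+1), (((k:ℝ) - ((n-k : ℕ):ℝ) + 1) * cH2 ν k (n-k)) := by
    rw [← Finset.sum_sub_distrib]
    exact Finset.sum_congr rfl fun k _ => coeff_diff hν k (n-k)
  have := sum_coeff_nonneg hν n
  linarith

lemma core_lt {ν q : ℝ} (hν : 0 < ν) (hq : 0 ≤ q) :
    (∑' k, bT (ν+2) q k) * (∑' k, bT ν q k) < (∑' k, bT (ν+1) q k) ^ 2 := by
  have h1 : 0 < ν + 1 := by linarith
  have h2 : 0 < ν + 2 := by linarith
  rw [sq, tsum_mul_tsum_eq_tsum_sum_range_of_summable_norm (bT_norm_summable h2 hq)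
      (bT_norm_summable hν hq),
    tsum_mul_tsum_eq_tsum_sum_range_of_summable_norm (bT_norm_summable h1 hq)
      (bT_norm_summable h1 hq)]
  refine Summable.tsum_lt_tsum_of_nonneg (i := 0) ?_ (cauchy_le hν hq) ?_ ?_
  · intro n
    exact Finset.sum_nonneg fun k _ => mul_nonneg (bT_nonneg h2 hq k) (bT_nonneg hν hq _)
  · simp only [zero_add, Finset.sum_range_one, Nat.sub_self]
    have b0 : ∀ μ : ℝ, bT μ q 0 = 1 / Real.Gamma (μ + 1) := fun μ => by simp [bT]
    rw [b0, b0, b0]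
    have hG1 : 0 < Real.Gamma (ν + 1) := Real.Gamma_pos_of_pos (by linarith)
    have e2 : Real.Gamma (ν + 1 + 1) = (ν + 1) * Real.Gamma (ν + 1) := Gstep (by linarith)
    have e3 : Real.Gamma (ν + 2 + 1) = (ν + 1 + 1) * Real.Gamma (ν + 1 + 1) := by
      rw [show ν + 2 + 1 = (ν + 1 + 1) + 1 by ring, Gstep (by linarith)]
    rw [e3, e2, div_mul_div_comm, div_mul_div_comm, one_mul]
    apply one_div_lt_one_div_of_lt (mul_pos (mul_pos h1 hG1) (mul_pos h1 hG1))
    nlinarith [mul_pos (mul_pos h1 hG1) hG1]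
  · exact (summable_norm_sum_mul_range_of_summable_norm (bT_norm_summable h1 hq)
      (bT_norm_summable h1 hq)).of_norm

lemma besselI_eq (ν : ℝ) {m : ℝ} (hm : 0 < m) :
    besselI ν m = (m/2) ^ ν * ∑' k, bT ν ((m/2)^2) k := by
  have hp : 0 < m / 2 := by linarith
  rw [← tsum_mul_left]
  simp only [besselI]
  congr 1; funext k
  have e : (2 * (k:ℝ) + ν) = ((2*k : ℕ) : ℝ) + ν := by push_cast; ring
  rw [e, Real.rpow_add hp, Real.rpow_natCast, pow_mul, bT]
  ring

theorem besselI_turan (ν : ℝ) (hν : 0 < ν) (m : ℝ) (hm : 0 < m) :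
    besselI (ν + 2) m * besselI ν m < (besselI (ν + 1) m) ^ 2 := by
  have hp : 0 < m / 2 := by linarith
  have hq : (0:ℝ) ≤ (m/2)^2 := sq_nonneg _
  rw [besselI_eq (ν+2) hm, besselI_eq ν hm, besselI_eq (ν+1) hm]
  have key := core_lt (ν := ν) (q := (m/2)^2) hν hq
  have hpow : 0 < (m/2) ^ (ν+2) * (m/2) ^ ν :=
    mul_pos (Real.rpow_pos_of_pos hp _) (Real.rpow_pos_of_pos hp _)
  have e2 : ((m/2) ^ (ν+1)) ^ 2 = (m/2) ^ (ν+2) * (m/2) ^ ν := by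
    rw [sq, ← Real.rpow_add hp, ← Real.rpow_add hp]
    congr 1
    ring
  calc (m/2) ^ (ν+2) * (∑' k, bT (ν+2) ((m/2)^2) k) *
        ((m/2) ^ ν * ∑' k, bT ν ((m/2)^2) k)
      = ((m/2) ^ (ν+2) * (m/2) ^ ν) *
        ((∑' k, bT (ν+2) ((m/2)^2) k) * ∑' k, bT ν ((m/2)^2) k) := by ring
    _ < ((m/2) ^ (ν+2) * (m/2) ^ ν) * (∑' k, bT (ν+1) ((m/2)^2) k) ^ 2 :=
        mul_lt_mul_of_pos_left key hpow
    _ = ((m/2) ^ (ν+1) * ∑' k, bT (ν+1) ((m/2)^2) k) ^ 2 := by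
        rw [mul_pow, e2]
end

section
/- For every ν > 0, the function L(x) = log(I_ν(x)) − ν·log(x) − x is strictly decreasing on (0, ∞); its derivative equals I_{ν+1}(x)/I_ν(x) − 1, which is strictly negative. -/
open Real

noncomputable def bcoef (ν : ℝ) (k : ℕ) : ℝ :=
  1 / ((Nat.factorial k : ℝ) * Real.Gamma (ν + k + 1))

noncomputable def bG (ν x : ℝ) : ℝ := ∑' k : ℕ, bcoef ν k * x ^ (2 * k)

lemma gammaArg_pos {ν : ℝ} (hν : 0 < ν) (k : ℕ) : 0 < Real.Gamma (ν + k + 1) :=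
  Real.Gamma_pos_of_pos (by positivity)

lemma bcoef_pos {ν : ℝ} (hν : 0 < ν) (k : ℕ) : 0 < bcoef ν k := by
  have h1 := gammaArg_pos hν k
  have h2 : (0:ℝ) < (Nat.factorial k : ℝ) := by positivity
  exact div_pos one_pos (by positivity)

lemma gamma_lower {ν : ℝ} (hν : 0 < ν) (k : ℕ) :
    (Nat.factorial k : ℝ) * Real.Gamma (ν + 1) ≤ Real.Gamma (ν + k + 1) := by
  induction k with
  | zero => simp
  | succ k ih =>
    have hs : (0:ℝ) < ν + k + 1 := by positivity
    have harg : (ν + ((k+1 : ℕ) : ℝ) + 1) = (ν + k + 1) + 1 := by push_cast; ring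
    rw [harg, Real.Gamma_add_one (ne_of_gt hs)]
    have hG := gammaArg_pos hν k
    have hk1 : ((k:ℝ) + 1) ≤ ν + k + 1 := by linarith
    calc ((Nat.factorial (k+1) : ℝ)) * Real.Gamma (ν + 1)
        = ((k:ℝ) + 1) * ((Nat.factorial k : ℝ) * Real.Gamma (ν + 1)) := by
          rw [Nat.factorial_succ]; push_cast; ring
      _ ≤ ((k:ℝ) + 1) * Real.Gamma (ν + k + 1) := by
          apply mul_le_mul_of_nonneg_left ih (by positivity)
      _ ≤ (ν + k + 1) * Real.Gamma (ν + k + 1) := by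
          apply mul_le_mul_of_nonneg_right hk1 hG.le

lemma bcoef_le {ν : ℝ} (hν : 0 < ν) (k : ℕ) :
    bcoef ν k ≤ (1 / Real.Gamma (ν + 1)) * (1 / (Nat.factorial k : ℝ)) := by
  have hG1 : 0 < Real.Gamma (ν + 1) := Real.Gamma_pos_of_pos (by positivity)
  have hF : (1:ℝ) ≤ (Nat.factorial k : ℝ) := by exact_mod_cast Nat.one_le_iff_ne_zero.mpr k.factorial_ne_zero
  have h1 : (Nat.factorial k : ℝ) * Real.Gamma (ν + 1)
      ≤ (Nat.factorial k : ℝ) * Real.Gamma (ν + k + 1) := by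
    have := gamma_lower hν k
    nlinarith [gammaArg_pos hν k]
  rw [bcoef, one_div_mul_one_div]
  apply one_div_le_one_div_of_le (by positivity)
  calc Real.Gamma (ν + 1) * (Nat.factorial k : ℝ)
      = (Nat.factorial k : ℝ) * Real.Gamma (ν + 1) := by ring
    _ ≤ _ := h1

lemma summable_bG {ν : ℝ} (hν : 0 < ν) (y : ℝ) :
    Summable (fun k : ℕ => bcoef ν k * y ^ (2 * k)) := by
  have hG1 : 0 < Real.Gamma (ν + 1) := Real.Gamma_pos_of_pos (by positivity)
  apply Summable.of_norm_bounded
    (g := fun k : ℕ => (1 / Real.Gamma (ν + 1)) * ((y^2) ^ k / (Nat.factorial k : ℝ)))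
    (((Real.summable_pow_div_factorial (y^2)).mul_left _))
  intro k
  have hy : (0:ℝ) ≤ y ^ (2 * k) := by rw [pow_mul]; positivity
  rw [Real.norm_eq_abs, abs_of_nonneg (mul_nonneg (bcoef_pos hν k).le hy)]
  calc bcoef ν k * y ^ (2*k)
      ≤ (1 / Real.Gamma (ν + 1)) * (1 / (Nat.factorial k : ℝ)) * y ^ (2*k) := by
        apply mul_le_mul_of_nonneg_right (bcoef_le hν k) hy
    _ = (1 / Real.Gamma (ν + 1)) * ((y^2) ^ k / (Nat.factorial k : ℝ)) := by
        rw [← pow_mul]; ring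

lemma bcoef_le2 {ν : ℝ} (hν : 0 < ν) (k : ℕ) :
    bcoef ν k ≤ 1 / ((Nat.factorial k : ℝ) * (Nat.factorial k : ℝ) * Real.Gamma (ν + 1)) := by
  have hG1 : 0 < Real.Gamma (ν + 1) := Real.Gamma_pos_of_pos (by positivity)
  have hF : (0:ℝ) < (Nat.factorial k : ℝ) := by positivity
  rw [bcoef]
  apply one_div_le_one_div_of_le (by positivity)
  calc (Nat.factorial k : ℝ) * (Nat.factorial k : ℝ) * Real.Gamma (ν + 1)
      = (Nat.factorial k : ℝ) * ((Nat.factorial k : ℝ) * Real.Gamma (ν + 1)) := by ring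
    _ ≤ (Nat.factorial k : ℝ) * Real.Gamma (ν + k + 1) :=
        mul_le_mul_of_nonneg_left (gamma_lower hν k) hF.le

lemma summable_deriv {ν : ℝ} (hν : 0 < ν) (R : ℝ) :
    Summable (fun k : ℕ => bcoef ν k * (2 * (k:ℝ)) * R ^ (2 * k)) := by
  have hG1 : 0 < Real.Gamma (ν + 1) := Real.Gamma_pos_of_pos (by positivity)
  apply Summable.of_norm_bounded
    (g := fun k : ℕ => (2 / Real.Gamma (ν + 1)) * ((R^2) ^ k / (Nat.factorial k : ℝ)))
    (((Real.summable_pow_div_factorial (R^2)).mul_left _))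
  intro k
  have hR : (0:ℝ) ≤ R ^ (2 * k) := by rw [pow_mul]; positivity
  have hb := bcoef_pos hν k
  rw [Real.norm_eq_abs, abs_of_nonneg (by positivity)]
  have hkF : (k:ℝ) ≤ (Nat.factorial k : ℝ) := by exact_mod_cast Nat.self_le_factorial k
  have hF : (0:ℝ) < (Nat.factorial k : ℝ) := by positivity
  have h1 : bcoef ν k * (2 * (k:ℝ)) ≤ 2 / ((Nat.factorial k : ℝ) * Real.Gamma (ν + 1)) := by
    calc bcoef ν k * (2 * (k:ℝ))
        ≤ (1 / ((Nat.factorial k : ℝ) * (Nat.factorial k : ℝ) * Real.Gamma (ν + 1))) * (2 * (Nat.factorial k : ℝ)) := by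
          apply mul_le_mul (bcoef_le2 hν k) (by linarith) (by positivity) (by positivity)
      _ = 2 / ((Nat.factorial k : ℝ) * Real.Gamma (ν + 1)) := by field_simp
  calc bcoef ν k * (2 * (k:ℝ)) * R ^ (2*k)
      ≤ (2 / ((Nat.factorial k : ℝ) * Real.Gamma (ν + 1))) * R ^ (2*k) :=
        mul_le_mul_of_nonneg_right h1 hR
    _ = (2 / Real.Gamma (ν + 1)) * ((R^2) ^ k / (Nat.factorial k : ℝ)) := by
        rw [← pow_mul, div_mul_eq_mul_div, div_mul_div_comm,
          mul_comm ((Nat.factorial k : ℝ)) (Real.Gamma (ν + 1))]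

-- id1 : bcoef (ν+1) k * (ν + k + 1) = bcoef ν k
lemma bcoef_id1 {ν : ℝ} (hν : 0 < ν) (k : ℕ) :
    bcoef (ν+1) k * (ν + k + 1) = bcoef ν k := by
  have hs : (0:ℝ) < ν + k + 1 := by positivity
  have harg : (ν + 1 + (k:ℝ) + 1) = (ν + (k:ℝ) + 1) + 1 := by ring
  have hG := gammaArg_pos hν k
  have hF : (0:ℝ) < (Nat.factorial k : ℝ) := by positivity
  rw [bcoef, bcoef, harg, Real.Gamma_add_one hs.ne']
  field_simp

-- id3 : bcoef ν (k+1) * (k+1) = bcoef (ν+1) k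
lemma bcoef_id3 {ν : ℝ} (hν : 0 < ν) (k : ℕ) :
    bcoef ν (k+1) * ((k:ℝ) + 1) = bcoef (ν+1) k := by
  have harg : (ν + ((k+1 : ℕ):ℝ) + 1) = (ν + 1 + (k:ℝ) + 1) := by push_cast; ring
  have hG : 0 < Real.Gamma (ν + 1 + (k:ℝ) + 1) := by
    rw [show (ν + 1 + (k:ℝ) + 1) = (ν+1) + (k:ℝ) + 1 by ring]
    exact gammaArg_pos (by linarith) k
  have hF : (0:ℝ) < (Nat.factorial k : ℝ) := by positivity
  rw [bcoef, bcoef, harg, Nat.factorial_succ]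
  push_cast
  field_simp

-- id2 : bcoef ν (k+1) * ((k+1) * (ν + k + 1)) = bcoef ν k
lemma bcoef_id2 {ν : ℝ} (hν : 0 < ν) (k : ℕ) :
    bcoef ν (k+1) * (((k:ℝ) + 1) * (ν + k + 1)) = bcoef ν k := by
  rw [show bcoef ν (k+1) * (((k:ℝ) + 1) * (ν + k + 1)) =
    (bcoef ν (k+1) * ((k:ℝ)+1)) * (ν + k + 1) by ring, bcoef_id3 hν k, bcoef_id1 hν k]

-- the reindexing: ∑' k, bcoef ν k * (2k * y^(2k-1)) = 2 y * bG (ν+1) y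
lemma tsum_deriv_eq {ν : ℝ} (hν : 0 < ν) (y : ℝ) :
    ∑' k : ℕ, bcoef ν k * ((2 * k : ℕ) * y ^ (2 * k - 1)) = 2 * y * bG (ν+1) y := by
  have hsum : Summable (fun k : ℕ => bcoef ν k * ((2 * k : ℕ) * y ^ (2 * k - 1))) := by
    apply Summable.of_norm_bounded
      (g := fun k : ℕ => bcoef ν k * (2 * (k:ℝ)) * (|y| + 1) ^ (2 * k)) (summable_deriv hν _)
    intro k
    have hb := bcoef_pos hν k
    have h1 : (1:ℝ) ≤ |y| + 1 := by linarith [abs_nonneg y]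
    rw [Real.norm_eq_abs, abs_mul, abs_of_nonneg hb.le, abs_mul]
    rw [show |((2 * k : ℕ) : ℝ)| = 2 * (k:ℝ) by push_cast; rw [abs_of_nonneg]; positivity]
    have hpow : |y ^ (2*k-1)| ≤ (|y| + 1) ^ (2*k) := by
      calc |y ^ (2*k-1)| = |y| ^ (2*k-1) := abs_pow y _
        _ ≤ (|y| + 1) ^ (2*k-1) := pow_le_pow_left₀ (abs_nonneg y) (by linarith) _
        _ ≤ (|y| + 1) ^ (2*k) := pow_le_pow_right₀ h1 (Nat.sub_le _ _)
    calc bcoef ν k * (2 * (k:ℝ) * |y ^ (2*k-1)|)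
        ≤ bcoef ν k * (2 * (k:ℝ) * ((|y| + 1) ^ (2*k))) :=
          mul_le_mul_of_nonneg_left (mul_le_mul_of_nonneg_left hpow (by positivity)) hb.le
      _ = bcoef ν k * (2 * (k:ℝ)) * (|y| + 1) ^ (2*k) := by ring
  rw [Summable.tsum_eq_zero_add hsum]
  simp only [Nat.mul_zero, Nat.cast_zero, zero_mul, mul_zero, zero_add, Nat.cast_ofNat]
  have hterm : ∀ k : ℕ, bcoef ν (k+1) * ((2 * (k+1) : ℕ) * y ^ (2 * (k+1) - 1))
      = (2 * y) * (bcoef (ν+1) k * y ^ (2 * k)) := by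
    intro k
    have h1 : (2 * (k+1) : ℕ) - 1 = 2*k + 1 := by omega
    rw [h1, pow_succ]
    have := bcoef_id3 hν k
    push_cast
    linear_combination (2 * y * y ^ (2*k)) * this
  calc ∑' k : ℕ, bcoef ν (k+1) * ((2 * (k+1) : ℕ) * y ^ (2 * (k+1) - 1))
      = ∑' k : ℕ, (2 * y) * (bcoef (ν+1) k * y ^ (2 * k)) := tsum_congr hterm
    _ = 2 * y * bG (ν+1) y := by rw [tsum_mul_left]; rfl

-- derivative of bG
lemma hasDerivAt_bG {ν : ℝ} (hν : 0 < ν) {y : ℝ} (hy : 0 < y) :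
    HasDerivAt (bG ν) (2 * y * bG (ν+1) y) y := by
  set R : ℝ := y + 1 with hR
  have hR1 : (1:ℝ) ≤ R := by simp [hR]; linarith
  have key := hasDerivAt_tsum_of_isPreconnected
    (u := fun k : ℕ => bcoef ν k * (2 * (k:ℝ)) * R ^ (2 * k))
    (t := Set.Ioo (0:ℝ) R)
    (g := fun (k : ℕ) (x : ℝ) => bcoef ν k * x ^ (2 * k))
    (g' := fun (k : ℕ) (x : ℝ) => bcoef ν k * ((2 * k : ℕ) * x ^ (2 * k - 1)))
    (summable_deriv hν R) isOpen_Ioo (convex_Ioo _ _).isPreconnected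
    (fun n z _ => (hasDerivAt_pow (2*n) z).const_mul (bcoef ν n))
    ?_ (y₀ := y) ⟨hy, by simp [hR]⟩ (summable_bG hν y) ⟨hy, by simp [hR]⟩
  · rw [tsum_deriv_eq hν y] at key
    exact key
  · intro n z hz
    have hb := bcoef_pos hν n
    have hz0 : 0 < z := hz.1
    have hzR : z ≤ R := hz.2.le
    rw [Real.norm_eq_abs, abs_of_nonneg (by positivity)]
    have : z ^ (2*n - 1) ≤ R ^ (2*n) :=
      le_trans (pow_le_pow_left₀ hz0.le hzR _) (pow_le_pow_right₀ (by linarith) (Nat.sub_le _ _))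
    calc bcoef ν n * ((2*n : ℕ) * z ^ (2*n-1)) = bcoef ν n * (2*(n:ℝ)) * z ^ (2*n-1) := by
          push_cast; ring
      _ ≤ bcoef ν n * (2*(n:ℝ)) * R ^ (2*n) := mul_le_mul_of_nonneg_left this (by positivity)

lemma besselI_eq_s4 {ν : ℝ} {x : ℝ} (hx : 0 < x) :
    besselI ν x = (x/2) ^ ν * bG ν (x/2) := by
  have h2 : (0:ℝ) < x/2 := by linarith
  rw [besselI, bG, ← tsum_mul_left]
  refine tsum_congr fun k => ?_
  rw [show (2 * (k:ℝ) + ν) = ((2*k : ℕ):ℝ) + ν by push_cast; ring,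
    Real.rpow_add h2, Real.rpow_natCast]
  rw [bcoef]; ring

lemma bG_pos {ν : ℝ} (hν : 0 < ν) (y : ℝ) : 0 < bG ν y := by
  refine Summable.tsum_pos (summable_bG hν y) (fun k => ?_) 0 ?_
  · have := bcoef_pos hν k
    rw [pow_mul]; positivity
  · simpa using bcoef_pos hν 0

lemma besselI_pos {ν : ℝ} (hν : 0 < ν) {x : ℝ} (hx : 0 < x) : 0 < besselI ν x := by
  rw [besselI_eq_s4 hx]
  have h2 : (0:ℝ) < x/2 := by linarith
  exact mul_pos (Real.rpow_pos_of_pos h2 ν) (bG_pos hν _)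

/-- Key inequality: `y * bG (ν+1) y < bG ν y` for `y > 0`. -/
lemma key_ineq {ν : ℝ} (hν : 0 < ν) {y : ℝ} (hy : 0 < y) :
    y * bG (ν+1) y < bG ν y := by
  set t : ℕ → ℝ := fun k => bcoef ν k * y ^ (2 * k) with ht
  have hν1 : (0:ℝ) < ν + 1 := by linarith
  have htpos : ∀ k, 0 < t k := fun k => mul_pos (bcoef_pos hν k) (by positivity)
  have hsum_t : Summable t := summable_bG hν y
  have hsum_t1 : Summable (fun k => t (k+1)) := (summable_nat_add_iff 1).mpr hsum_t
  have hsum_g : Summable (fun k => (t k + t (k+1)) / 2) := by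
    exact (hsum_t.add hsum_t1).div_const 2
  -- termwise bound
  have hterm : ∀ k : ℕ, y * (bcoef (ν+1) k * y ^ (2*k)) < (t k + t (k+1)) / 2 := by
    intro k
    set p : ℝ := y * (bcoef (ν+1) k * y ^ (2*k)) with hp
    have hs : (0:ℝ) < ν + k + 1 := by positivity
    have hppos : 0 < p := mul_pos hy (mul_pos (bcoef_pos hν1 k) (by positivity))
    have hq := htpos k
    have hr := htpos (k+1)
    -- p^2 < t k * t (k+1)
    have hsq : p^2 < t k * t (k+1) := by
      have e1 := bcoef_id1 hν k
      have e2 := bcoef_id2 hν k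
      have hb := bcoef_pos hν1 k
      have hb1 := bcoef_pos hν (k+1)
      have hbk := bcoef_pos hν k
      -- bcoef (ν+1) k ^ 2 < bcoef ν k * bcoef ν (k+1)
      have hc : bcoef (ν+1) k ^ 2 < bcoef ν k * bcoef ν (k+1) := by
        have hklt : ((k:ℝ) + 1) < ν + k + 1 := by linarith
        have h1 : bcoef (ν+1) k * ((k:ℝ)+1) < bcoef (ν+1) k * (ν + k + 1) :=
          (mul_lt_mul_iff_right₀ hb).mpr hklt
        rw [e1] at h1
        -- so bcoef (ν+1) k * (k+1) < bcoef ν k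
        have h2 : bcoef (ν+1) k ^ 2 * (((k:ℝ)+1) * (ν+k+1)) <
            bcoef ν k * (bcoef ν (k+1) * (((k:ℝ)+1) * (ν+k+1))) := by
          rw [e2]
          calc bcoef (ν+1) k ^ 2 * (((k:ℝ)+1) * (ν+k+1))
              = (bcoef (ν+1) k * ((k:ℝ)+1)) * (bcoef (ν+1) k * (ν+k+1)) := by ring
            _ < bcoef ν k * (bcoef (ν+1) k * (ν+k+1)) := by
                apply mul_lt_mul_of_pos_right h1 (by positivity)
            _ = bcoef ν k * bcoef ν k := by rw [e1]
        have hpos : (0:ℝ) < ((k:ℝ)+1) * (ν+k+1) := by positivity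
        rw [show bcoef ν k * (bcoef ν (k+1) * (((k:ℝ)+1) * (ν+k+1)))
          = (bcoef ν k * bcoef ν (k+1)) * (((k:ℝ)+1) * (ν+k+1)) from by ring] at h2
        exact lt_of_mul_lt_mul_right h2 hpos.le
      have hyy : y ^ (2*k) * y ^ (2*(k+1)) = (y * y ^ (2*k))^2 := by ring
      calc p^2 = bcoef (ν+1) k ^ 2 * (y * y ^ (2*k))^2 := by rw [hp]; ring
        _ < (bcoef ν k * bcoef ν (k+1)) * (y * y ^ (2*k))^2 := by
            apply mul_lt_mul_of_pos_right hc (by positivity)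
        _ = t k * t (k+1) := by rw [ht]; simp only []; ring
    nlinarith [sq_nonneg (t k - t (k+1)), hq, hr, hppos]
  -- sum up
  have hf_nonneg : ∀ k : ℕ, 0 ≤ y * (bcoef (ν+1) k * y ^ (2*k)) := fun k =>
    (mul_pos hy (mul_pos (bcoef_pos hν1 k) (by positivity))).le
  have hlt : ∑' k : ℕ, y * (bcoef (ν+1) k * y ^ (2*k)) < ∑' k : ℕ, (t k + t (k+1)) / 2 :=
    Summable.tsum_lt_tsum_of_nonneg hf_nonneg (fun k => (hterm k).le) (hterm 0) hsum_g
  have hshift : ∑' k : ℕ, t (k+1) = (∑' k, t k) - t 0 := by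
    rw [Summable.tsum_eq_zero_add hsum_t]; ring
  have hG1 : ∑' k : ℕ, y * (bcoef (ν+1) k * y ^ (2*k)) = y * bG (ν+1) y := tsum_mul_left
  have hsumg : ∑' k : ℕ, (t k + t (k+1)) / 2 = (∑' k, t k) - t 0 / 2 := by
    rw [tsum_div_const, Summable.tsum_add hsum_t hsum_t1, hshift]; ring
  rw [hG1, hsumg] at hlt
  have : bG ν y = ∑' k, t k := rfl
  rw [this]
  have ht0 := htpos 0
  linarith


lemma hasDerivAt_L {ν : ℝ} (hν : 0 < ν) {x : ℝ} (hx : 0 < x) :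
    HasDerivAt (fun x : ℝ => Real.log (besselI ν x) - ν * Real.log x - x)
      (besselI (ν + 1) x / besselI ν x - 1) x := by
  have h2 : (0:ℝ) < x/2 := by linarith
  have hGpos := bG_pos hν (x/2)
  have hcomp : HasDerivAt (fun z : ℝ => bG ν (z/2)) ((x/2) * bG (ν+1) (x/2)) x := by
    have h := (hasDerivAt_bG hν h2).comp x ((hasDerivAt_id x).div_const 2)
    refine h.congr_deriv ?_
    ring
  have hlog : HasDerivAt (fun z : ℝ => Real.log (bG ν (z/2)))
      ((x/2) * bG (ν+1) (x/2) / bG ν (x/2)) x := hcomp.log hGpos.ne'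
  have hRHS : HasDerivAt (fun z : ℝ => Real.log (bG ν (z/2)) - ν * Real.log 2 - z)
      ((x/2) * bG (ν+1) (x/2) / bG ν (x/2) - 1) x := (hlog.sub_const _).sub (hasDerivAt_id x)
  have hev : (fun z : ℝ => Real.log (besselI ν z) - ν * Real.log z - z)
      =ᶠ[nhds x] (fun z => Real.log (bG ν (z/2)) - ν * Real.log 2 - z) := by
    filter_upwards [isOpen_Ioi.mem_nhds hx] with z hz
    have hz0 : (0:ℝ) < z := hz
    have hz2 : (0:ℝ) < z/2 := by linarith
    rw [besselI_eq_s4 hz0, Real.log_mul (Real.rpow_pos_of_pos hz2 ν).ne' (bG_pos hν _).ne',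
      Real.log_rpow hz2, Real.log_div hz0.ne' two_ne_zero]
    ring
  have hD : HasDerivAt (fun z : ℝ => Real.log (besselI ν z) - ν * Real.log z - z)
      ((x/2) * bG (ν+1) (x/2) / bG ν (x/2) - 1) x := hRHS.congr_of_eventuallyEq hev
  have hval : besselI (ν+1) x / besselI ν x = (x/2) * bG (ν+1) (x/2) / bG ν (x/2) := by
    rw [besselI_eq_s4 (ν := ν+1) hx, besselI_eq_s4 (ν := ν) hx]
    have hr : (x/2:ℝ) ^ (ν+1) = (x/2)^ν * (x/2) := by
      rw [Real.rpow_add h2, Real.rpow_one]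
    rw [hr]
    have hrp : (0:ℝ) < (x/2:ℝ)^ν := Real.rpow_pos_of_pos h2 ν
    field_simp
  rw [hval]
  exact hD

lemma besselI_deriv_neg {ν : ℝ} (hν : 0 < ν) {x : ℝ} (hx : 0 < x) :
    besselI (ν + 1) x / besselI ν x - 1 < 0 := by
  have h2 : (0:ℝ) < x/2 := by linarith
  have hlt : besselI (ν+1) x < besselI ν x := by
    rw [besselI_eq_s4 (ν := ν+1) hx, besselI_eq_s4 (ν := ν) hx,
      show (x/2:ℝ) ^ (ν+1) = (x/2)^ν * (x/2) by rw [Real.rpow_add h2, Real.rpow_one]]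
    have hrp : (0:ℝ) < (x/2:ℝ)^ν := Real.rpow_pos_of_pos h2 ν
    calc (x/2)^ν * (x/2) * bG (ν+1) (x/2) = (x/2)^ν * ((x/2) * bG (ν+1) (x/2)) := by ring
      _ < (x/2)^ν * bG ν (x/2) := by
          exact mul_lt_mul_of_pos_left (key_ineq hν h2) hrp
  have hpos := besselI_pos hν hx
  have : besselI (ν+1) x / besselI ν x < 1 := (div_lt_one hpos).mpr hlt
  linarith

theorem besselI_L_strictAnti (ν : ℝ) (hν : 0 < ν) :
    StrictAntiOn (fun x : ℝ => Real.log (besselI ν x) - ν * Real.log x - x) (Set.Ioi 0) ∧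
    ∀ x : ℝ, 0 < x →
      HasDerivAt (fun x : ℝ => Real.log (besselI ν x) - ν * Real.log x - x)
        (besselI (ν + 1) x / besselI ν x - 1) x ∧
      besselI (ν + 1) x / besselI ν x - 1 < 0 := by
  constructor
  · apply strictAntiOn_of_deriv_neg (convex_Ioi 0)
    · exact fun x hx => ((hasDerivAt_L hν hx).differentiableAt.continuousAt).continuousWithinAt
    · intro x hx
      rw [interior_Ioi] at hx
      rw [(hasDerivAt_L hν hx).deriv]
      exact besselI_deriv_neg hν hx
  · exact fun x hx => ⟨hasDerivAt_L hν hx, besselI_deriv_neg hν hx⟩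
end

section
/- Let κ, ν, τ > 0 and define M(w) = √(κ² + 2κw/τ + 1/τ²) and J(w) = −w/τ + log(I_ν(M(w))/M(w)^ν) − log(I_ν(κ)/κ^ν) for w ∈ [−1, 1]. Then for every w with 0 < w ≤ 1, J(w) < J(−w). -/
/-- `M κ τ w = √(κ² + 2κw/τ + 1/τ²)`. -/
noncomputable def Mfun (κ τ w : ℝ) : ℝ :=
  Real.sqrt (κ ^ 2 + 2 * κ * w / τ + 1 / τ ^ 2)

/-- The convergence function `J`. -/
noncomputable def Jfun (κ ν τ w : ℝ) : ℝ :=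
  -w / τ + Real.log (besselI ν (Mfun κ τ w) / (Mfun κ τ w) ^ ν) -
    Real.log (besselI ν κ / κ ^ ν)

namespace JfunAux

/-- coefficient of `m^(2k)` in the even power series for `besselI ν m / (m/2)^ν`. -/
noncomputable def aC (ν : ℝ) (k : ℕ) : ℝ :=
  1 / ((4:ℝ)^k * (Nat.factorial k : ℝ) * Real.Gamma (ν + k + 1))

/-- the even power series. -/
noncomputable def gS (ν m : ℝ) : ℝ := ∑' k : ℕ, aC ν k * m ^ (2*k)

lemma gamma_pos (ν : ℝ) (hν : 0 < ν) (k : ℕ) : 0 < Real.Gamma (ν + k + 1) :=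
  Real.Gamma_pos_of_pos (by positivity)

lemma aC_pos (ν : ℝ) (hν : 0 < ν) (k : ℕ) : 0 < aC ν k := by
  have := gamma_pos ν hν k
  unfold aC
  have h4 : (0:ℝ) < 4^k := by positivity
  have hf : (0:ℝ) < (Nat.factorial k : ℝ) := by positivity
  positivity

lemma term_nonneg (ν : ℝ) (hν : 0 < ν) (m : ℝ) (k : ℕ) : 0 ≤ aC ν k * m ^ (2*k) := by
  have h1 : m ^ (2*k) = (m^2)^k := by rw [pow_mul]
  rw [h1]
  exact mul_nonneg (aC_pos ν hν k).le (by positivity)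

lemma two_fact_le (k : ℕ) : Nat.factorial (2*k) ≤ 4^k * (Nat.factorial k)^2 := by
  induction k with
  | zero => simp
  | succ n ih =>
    have h1 : 2 * (n+1) = (2*n+1) + 1 := by ring
    rw [h1, Nat.factorial_succ, Nat.factorial_succ]
    calc (2*n+1+1) * ((2*n+1) * Nat.factorial (2*n))
        ≤ (2*(n+1)) * ((2*(n+1)) * Nat.factorial (2*n)) := by
          apply Nat.mul_le_mul (by omega) (Nat.mul_le_mul (by omega) le_rfl)
      _ = 4 * (n+1)^2 * Nat.factorial (2*n) := by ring
      _ ≤ 4 * (n+1)^2 * (4^n * (Nat.factorial n)^2) := by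
          exact Nat.mul_le_mul le_rfl ih
      _ = 4^(n+1) * ((n+1) * Nat.factorial n)^2 := by ring

lemma fac_gamma_le (ν : ℝ) (hν : 0 < ν) (k : ℕ) :
    (Nat.factorial k : ℝ) * Real.Gamma (ν + 1) ≤ Real.Gamma (ν + k + 1) := by
  induction k with
  | zero => simp
  | succ n ih =>
    have h0 : (ν + n + 1) ≠ 0 := by positivity
    have h1 : Real.Gamma (ν + (n+1:ℕ) + 1) = (ν + n + 1) * Real.Gamma (ν + n + 1) := by
      push_cast
      rw [show ν + ((n:ℝ)+1) + 1 = (ν + (n:ℝ) + 1) + 1 by ring, Real.Gamma_add_one h0]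
    rw [h1, Nat.factorial_succ]
    push_cast
    have hg := gamma_pos ν hν n
    have hn : (0:ℝ) ≤ (n:ℝ) := Nat.cast_nonneg n
    have s1 := mul_le_mul_of_nonneg_left ih (show (0:ℝ) ≤ (n:ℝ)+1 by positivity)
    have s2 : ((n:ℝ)+1) * Real.Gamma (ν+(n:ℝ)+1) ≤ (ν+(n:ℝ)+1) * Real.Gamma (ν+(n:ℝ)+1) := by
      nlinarith
    nlinarith [s1, s2]

lemma summable_gS (ν : ℝ) (hν : 0 < ν) (m : ℝ) :
    Summable (fun k : ℕ => aC ν k * m ^ (2*k)) := by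
  have hG1 : (0:ℝ) < Real.Gamma (ν + 1) := Real.Gamma_pos_of_pos (by linarith)
  apply Summable.of_nonneg_of_le (term_nonneg ν hν m)
    (f := fun k => (1 / Real.Gamma (ν+1)) * ((m^2)^k / (Nat.factorial k : ℝ)))
  · intro k
    have hfk : (0:ℝ) < (Nat.factorial k : ℝ) := by positivity
    have h4 : (1:ℝ) ≤ 4^k := one_le_pow₀ (by norm_num)
    have hG := gamma_pos ν hν k
    have hfg := fac_gamma_le ν hν k
    have key : aC ν k ≤ 1 / (Real.Gamma (ν+1) * (Nat.factorial k : ℝ)) := by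
      unfold aC
      apply one_div_le_one_div_of_le (by positivity)
      have hfk1 : (1:ℝ) ≤ (Nat.factorial k : ℝ) := by
        exact_mod_cast Nat.one_le_iff_ne_zero.mpr (Nat.factorial_ne_zero k)
      have h41 : (1:ℝ) ≤ 4^k * (Nat.factorial k : ℝ) := by nlinarith
      have c1 : Real.Gamma (ν+1) * (Nat.factorial k : ℝ) ≤ Real.Gamma (ν+(k:ℝ)+1) := by
        linarith [hfg]
      have c2 : Real.Gamma (ν+(k:ℝ)+1) ≤ 4^k * (Nat.factorial k : ℝ) * Real.Gamma (ν+(k:ℝ)+1) := by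
        nlinarith
      linarith
    have hm : (0:ℝ) ≤ (m^2)^k := by positivity
    calc aC ν k * m ^ (2*k) = aC ν k * (m^2)^k := by rw [pow_mul]
      _ ≤ (1 / (Real.Gamma (ν+1) * (Nat.factorial k : ℝ))) * (m^2)^k := by
          exact mul_le_mul_of_nonneg_right key hm
      _ = (1 / Real.Gamma (ν+1)) * ((m^2)^k / (Nat.factorial k : ℝ)) := by
          field_simp
  · exact (Real.summable_pow_div_factorial (m^2)).mul_left _

lemma gS_pos (ν : ℝ) (hν : 0 < ν) (m : ℝ) : 0 < gS ν m := by
  apply Summable.tsum_pos (summable_gS ν hν m) (term_nonneg ν hν m) 0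
  simpa using aC_pos ν hν 0

lemma besselI_eq (ν : ℝ) (hν : 0 < ν) (m : ℝ) (hm : 0 < m) :
    besselI ν m = (m/2) ^ ν * gS ν m := by
  unfold besselI gS
  rw [← tsum_mul_left]
  congr 1; funext k
  have hm2 : (0:ℝ) < m/2 := by linarith
  rw [show (2*(k:ℝ) + ν) = ν + ((2*k : ℕ) : ℝ) by push_cast; ring,
    Real.rpow_add hm2, Real.rpow_natCast]
  have hG := (gamma_pos ν hν k).ne'
  have h4 : ((4:ℝ)^k) ≠ 0 := by positivity
  have hf : ((Nat.factorial k : ℝ)) ≠ 0 := by positivity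
  unfold aC
  rw [div_pow, show ((2:ℝ)^(2*k)) = 4^k by rw [pow_mul]; norm_num]
  field_simp

lemma besselI_div (ν : ℝ) (hν : 0 < ν) (m : ℝ) (hm : 0 < m) :
    besselI ν m / m ^ ν = gS ν m / (2:ℝ) ^ ν := by
  rw [besselI_eq ν hν m hm, Real.div_rpow hm.le (by norm_num : (0:ℝ) ≤ 2)]
  have h1 : (0:ℝ) < m ^ ν := Real.rpow_pos_of_pos hm ν
  have h2 : (0:ℝ) < (2:ℝ) ^ ν := Real.rpow_pos_of_pos (by norm_num) ν
  field_simp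

lemma summable_cosh (x : ℝ) :
    Summable (fun k : ℕ => x^(2*k) / (Nat.factorial (2*k) : ℝ)) := by
  apply Summable.of_nonneg_of_le (f := fun k : ℕ => (x^2)^k / (Nat.factorial k : ℝ))
  · intro k
    have h1 : x ^ (2*k) = (x^2)^k := by rw [pow_mul]
    rw [h1]; positivity
  · intro k
    have h1 : x ^ (2*k) = (x^2)^k := by rw [pow_mul]
    rw [h1]
    have h2 : (Nat.factorial k : ℝ) ≤ (Nat.factorial (2*k) : ℝ) := by
      exact_mod_cast Nat.factorial_le (by omega)
    gcongr
    all_goals first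
      | positivity
      | (exact_mod_cast Nat.factorial_pos k)
      | exact h2
  · exact Real.summable_pow_div_factorial (x^2)

lemma cosh_tsum (x : ℝ) :
    Real.cosh x = ∑' k : ℕ, x^(2*k) / (Nat.factorial (2*k) : ℝ) := by
  have he : ∀ y : ℝ, Real.exp y = ∑' n : ℕ, y^n / (Nat.factorial n : ℝ) := by
    intro y
    rw [Real.exp_eq_exp_ℝ, NormedSpace.exp_eq_tsum_div]
  have hs : ∀ y : ℝ, Summable (fun n : ℕ => y^n / (Nat.factorial n : ℝ)) :=
    fun y => Real.summable_pow_div_factorial y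
  set f : ℕ → ℝ := fun n => (x^n / (Nat.factorial n : ℝ) + (-x)^n / (Nat.factorial n : ℝ)) / 2
    with hf
  have heven : ∀ k : ℕ, f (2*k) = x^(2*k) / (Nat.factorial (2*k) : ℝ) := by
    intro k
    have h1 : (-x)^(2*k) = x^(2*k) := Even.neg_pow (even_two_mul k) x
    rw [hf]; simp only [h1]; ring
  have hodd : ∀ k : ℕ, f (2*k+1) = 0 := by
    intro k
    have h1 : (-x)^(2*k+1) = -(x^(2*k+1)) := Odd.neg_pow (by exact ⟨k, by ring⟩) x
    rw [hf]; simp only [h1]; ring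
  have hse : Summable (fun k : ℕ => f (2*k)) :=
    (summable_cosh x).congr (fun k => (heven k).symm)
  have hso : Summable (fun k : ℕ => f (2*k+1)) := by
    apply summable_zero.congr (fun k => (hodd k).symm)
  have hkey := tsum_even_add_odd hse hso
  have h2 : ∑' k : ℕ, f (2*k) = ∑' k : ℕ, x^(2*k) / (Nat.factorial (2*k) : ℝ) :=
    tsum_congr heven
  have h3 : ∑' k : ℕ, f (2*k+1) = 0 := by
    rw [tsum_congr hodd]; exact tsum_zero
  have h4 : ∑' n : ℕ, f n = Real.cosh x := by
    have hc : ∀ n : ℕ, f n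
        = (x^n / (Nat.factorial n : ℝ) + (-x)^n / (Nat.factorial n : ℝ)) / 2 := fun n => rfl
    rw [tsum_congr hc, tsum_div_const, Summable.tsum_add (hs x) (hs (-x)), ← he x, ← he (-x),
      Real.cosh_eq]
  rw [← hkey, h3, add_zero] at h4
  rw [← h2]
  exact h4.symm

/-- the ratio `aC ν k * (2k)!` is antitone. -/
lemma rho_antitone (ν : ℝ) (hν : 0 < ν) :
    Antitone (fun k : ℕ => aC ν k * (Nat.factorial (2*k) : ℝ)) := by
  apply antitone_nat_of_succ_le
  intro k
  have hG : (0:ℝ) < Real.Gamma (ν + k + 1) := gamma_pos ν hν k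
  have hG2 : Real.Gamma (ν + ((k+1:ℕ):ℝ) + 1) = (ν + k + 1) * Real.Gamma (ν + k + 1) := by
    push_cast
    rw [show ν + ((k:ℝ)+1) + 1 = (ν + (k:ℝ) + 1) + 1 by ring,
      Real.Gamma_add_one (by positivity)]
  have hfac1 : (Nat.factorial (2*(k+1)) : ℝ)
      = (2*(k:ℝ)+2) * ((2*(k:ℝ)+1) * (Nat.factorial (2*k) : ℝ)) := by
    rw [show 2*(k+1) = (2*k+1)+1 by ring, Nat.factorial_succ, Nat.factorial_succ]
    push_cast; ring
  have hfac2 : (Nat.factorial (k+1) : ℝ) = ((k:ℝ)+1) * (Nat.factorial k : ℝ) := by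
    rw [Nat.factorial_succ]; push_cast; ring
  unfold aC
  rw [hG2, hfac1, hfac2]
  have hfk : (0:ℝ) < (Nat.factorial k : ℝ) := by positivity
  have hf2k : (0:ℝ) < (Nat.factorial (2*k) : ℝ) := by positivity
  have h4 : (0:ℝ) < (4:ℝ)^k := by positivity
  rw [div_mul_eq_mul_div, div_mul_eq_mul_div, one_mul, one_mul, pow_succ]
  rw [div_le_div_iff₀ (by positivity) (by positivity)]
  have hkey : (2*(k:ℝ)+2) * (2*(k:ℝ)+1) ≤ 4 * ((k:ℝ)+1) * (ν + k + 1) := by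
    nlinarith [Nat.cast_nonneg (α := ℝ) k]
  nlinarith [mul_pos (mul_pos h4 hfk) (mul_pos hG hf2k),
    mul_le_mul_of_nonneg_right hkey
      (le_of_lt (mul_pos (mul_pos h4 hfk) (mul_pos hG hf2k)))]

lemma cross_ineq (ν : ℝ) (hν : 0 < ν) {k l : ℕ} (hkl : k ≤ l) :
    aC ν l * ((Nat.factorial (2*k) : ℝ))⁻¹ ≤ aC ν k * ((Nat.factorial (2*l) : ℝ))⁻¹ := by
  have h := rho_antitone ν hν hkl
  simp only at h
  have hk : (0:ℝ) < (Nat.factorial (2*k) : ℝ) := by positivity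
  have hl : (0:ℝ) < (Nat.factorial (2*l) : ℝ) := by positivity
  have h5 := mul_le_mul_of_nonneg_right h
    (by positivity : (0:ℝ) ≤ ((Nat.factorial (2*k) : ℝ))⁻¹ * ((Nat.factorial (2*l) : ℝ))⁻¹)
  calc aC ν l * ((Nat.factorial (2*k) : ℝ))⁻¹
      = aC ν l * (Nat.factorial (2*l) : ℝ)
        * (((Nat.factorial (2*k) : ℝ))⁻¹ * ((Nat.factorial (2*l) : ℝ))⁻¹) := by
        field_simp
    _ ≤ aC ν k * (Nat.factorial (2*k) : ℝ)
        * (((Nat.factorial (2*k) : ℝ))⁻¹ * ((Nat.factorial (2*l) : ℝ))⁻¹) := h5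
    _ = aC ν k * ((Nat.factorial (2*l) : ℝ))⁻¹ := by
        field_simp

lemma mono_lem (a b : ℝ) (ha : 0 ≤ a) (hab : a ≤ b) {k l : ℕ} (hkl : k ≤ l) :
    b^(2*k) * a^(2*l) ≤ a^(2*k) * b^(2*l) := by
  have hb : 0 ≤ b := ha.trans hab
  have h1 : 2*l = 2*k + 2*(l-k) := by omega
  rw [h1, pow_add, pow_add]
  have h2 : a^(2*(l-k)) ≤ b^(2*(l-k)) := pow_le_pow_left₀ ha hab _
  have h3 : (0:ℝ) ≤ a^(2*k) * b^(2*k) := by positivity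
  have h4 := mul_le_mul_of_nonneg_left h2 h3
  nlinarith [h4]

noncomputable def cC (k : ℕ) : ℝ := ((Nat.factorial (2*k) : ℝ))⁻¹

lemma cC_pos (k : ℕ) : 0 < cC k := by unfold cC; positivity

lemma cosh_tsum' (x : ℝ) : Real.cosh x = ∑' k : ℕ, cC k * x ^ (2*k) := by
  rw [cosh_tsum x]
  exact tsum_congr fun k => by unfold cC; ring

lemma summable_cosh' (x : ℝ) : Summable (fun k : ℕ => cC k * x ^ (2*k)) :=
  (summable_cosh x).congr fun k => by unfold cC; ring

lemma cosh_term_nonneg (x : ℝ) (k : ℕ) : 0 ≤ cC k * x^(2*k) := by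
  rw [pow_mul]; exact mul_nonneg (cC_pos k).le (by positivity)

lemma cross_ineq' (ν : ℝ) (hν : 0 < ν) {k l : ℕ} (hkl : k ≤ l) :
    aC ν l * cC k ≤ aC ν k * cC l := by
  unfold cC; exact cross_ineq ν hν hkl

set_option maxHeartbeats 1000000 in
lemma cheb (ν : ℝ) (hν : 0 < ν) {a b : ℝ} (ha : 0 ≤ a) (hab : a ≤ b) :
    gS ν b * Real.cosh a ≤ gS ν a * Real.cosh b := by
  have nsum : ∀ (f : ℕ → ℝ), Summable f → (∀ k, 0 ≤ f k) → Summable (fun k => ‖f k‖) :=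
    fun f hf hnn => hf.congr (fun k => by rw [Real.norm_eq_abs, abs_of_nonneg (hnn k)])
  have hP1 : gS ν a * Real.cosh b
      = ∑' p : ℕ × ℕ, (aC ν p.1 * a^(2*p.1)) * (cC p.2 * b^(2*p.2)) := by
    rw [cosh_tsum' b]
    unfold gS
    exact tsum_mul_tsum_of_summable_norm
      (nsum _ (summable_gS ν hν a) (term_nonneg ν hν a))
      (nsum _ (summable_cosh' b) (cosh_term_nonneg b))
  have hP2 : gS ν b * Real.cosh a
      = ∑' p : ℕ × ℕ, (aC ν p.1 * b^(2*p.1)) * (cC p.2 * a^(2*p.2)) := by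
    rw [cosh_tsum' a]
    unfold gS
    exact tsum_mul_tsum_of_summable_norm
      (nsum _ (summable_gS ν hν b) (term_nonneg ν hν b))
      (nsum _ (summable_cosh' a) (cosh_term_nonneg a))
  have hS1 : Summable (fun p : ℕ × ℕ => (aC ν p.1 * a^(2*p.1)) * (cC p.2 * b^(2*p.2))) :=
    Summable.mul_of_nonneg (summable_gS ν hν a) (summable_cosh' b)
      (fun k => term_nonneg ν hν a k) (fun k => cosh_term_nonneg b k)
  have hS2 : Summable (fun p : ℕ × ℕ => (aC ν p.1 * b^(2*p.1)) * (cC p.2 * a^(2*p.2))) :=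
    Summable.mul_of_nonneg (summable_gS ν hν b) (summable_cosh' a)
      (fun k => term_nonneg ν hν b k) (fun k => cosh_term_nonneg a k)
  set F : ℕ × ℕ → ℝ := fun p =>
    (aC ν p.1 * a^(2*p.1)) * (cC p.2 * b^(2*p.2))
      - (aC ν p.1 * b^(2*p.1)) * (cC p.2 * a^(2*p.2)) with hFdef
  have hFs : Summable F := hS1.sub hS2
  have hFswap : Summable (fun p : ℕ × ℕ => F (p.2, p.1)) := by
    have h := (Equiv.prodComm ℕ ℕ).summable_iff.2 hFs
    exact h
  have hkey : ∑' p : ℕ × ℕ, F (p.2, p.1) = ∑' p : ℕ × ℕ, F p := by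
    have := (Equiv.prodComm ℕ ℕ).tsum_eq F
    exact this
  have hnn : ∀ p : ℕ × ℕ, 0 ≤ F p + F (p.2, p.1) := by
    rintro ⟨k, l⟩
    simp only [hFdef]
    rcases le_total k l with h | h
    · have hcr := cross_ineq' ν hν h
      have hm := mono_lem a b ha hab h
      have hprod := mul_nonneg (sub_nonneg.2 hcr) (sub_nonneg.2 hm)
      nlinarith [hprod]
    · have hcr := cross_ineq' ν hν h
      have hm := mono_lem a b ha hab h
      have hprod := mul_nonneg (sub_nonneg.2 hcr) (sub_nonneg.2 hm)
      nlinarith [hprod]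
  have htot : 0 ≤ ∑' p : ℕ × ℕ, F p := by
    have h1 : 0 ≤ ∑' p : ℕ × ℕ, (F p + F (p.2, p.1)) := tsum_nonneg hnn
    have h2 : ∑' p : ℕ × ℕ, (F p + F (p.2, p.1))
        = ∑' p : ℕ × ℕ, F p + ∑' p : ℕ × ℕ, F (p.2, p.1) := Summable.tsum_add hFs hFswap
    rw [h2, hkey] at h1
    linarith
  have hdiff : gS ν a * Real.cosh b - gS ν b * Real.cosh a = ∑' p : ℕ × ℕ, F p := by
    rw [hP1, hP2, ← Summable.tsum_sub hS1 hS2]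
  linarith

lemma cosh_mul_exp {a b : ℝ} (hab : a < b) :
    Real.cosh b < Real.cosh a * Real.exp (b - a) := by
  rw [Real.cosh_eq, Real.cosh_eq]
  have h1 : Real.exp a * Real.exp (b-a) = Real.exp b := by
    rw [← Real.exp_add]; ring_nf
  have h2 : Real.exp (-a) * Real.exp (b-a) = Real.exp (b - 2*a) := by
    rw [← Real.exp_add]; ring_nf
  have h3 : Real.exp (-b) < Real.exp (b - 2*a) := Real.exp_lt_exp.2 (by linarith)
  nlinarith [h1, h2, h3]

lemma cosh_lt_exp {x : ℝ} (hx : 0 < x) : Real.cosh x < Real.exp x := by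
  rw [Real.cosh_eq]
  have h3 : Real.exp (-x) < Real.exp x := Real.exp_lt_exp.2 (by linarith)
  linarith

lemma gS_le_cosh (ν : ℝ) (hν : 0 < ν) (m : ℝ) :
    gS ν m ≤ Real.cosh m / Real.Gamma (ν + 1) := by
  have hΓ : 0 < Real.Gamma (ν+1) := Real.Gamma_pos_of_pos (by linarith)
  rw [cosh_tsum' m, ← tsum_div_const]
  apply Summable.tsum_le_tsum ?_ (summable_gS ν hν m) ((summable_cosh' m).div_const _)
  intro k
  have hfk : (0:ℝ) < (Nat.factorial k : ℝ) := by positivity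
  have hf2k : (0:ℝ) < (Nat.factorial (2*k) : ℝ) := by positivity
  have hG := gamma_pos ν hν k
  have h4p : (0:ℝ) < (4:ℝ)^k := by positivity
  have key : aC ν k ≤ cC k / Real.Gamma (ν+1) := by
    unfold aC cC
    rw [show ((Nat.factorial (2*k) : ℝ))⁻¹ / Real.Gamma (ν+1)
      = 1 / ((Nat.factorial (2*k) : ℝ) * Real.Gamma (ν+1)) by field_simp]
    apply one_div_le_one_div_of_le (by positivity)
    have t1 : ((Nat.factorial (2*k)):ℝ) ≤ 4^k * ((Nat.factorial k):ℝ)^2 := by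
      exact_mod_cast two_fact_le k
    have t2 := fac_gamma_le ν hν k
    have t3 := mul_le_mul_of_nonneg_right t1 hΓ.le
    have t4 := mul_le_mul_of_nonneg_left t2 (by positivity : (0:ℝ) ≤ 4^k * (Nat.factorial k : ℝ))
    nlinarith [t3, t4]
  have hmn : (0:ℝ) ≤ m^(2*k) := by rw [pow_mul]; positivity
  calc aC ν k * m^(2*k) ≤ (cC k / Real.Gamma (ν+1)) * m^(2*k) :=
        mul_le_mul_of_nonneg_right key hmn
    _ = cC k * m^(2*k) / Real.Gamma (ν+1) := by ring

lemma besselI_zero (ν : ℝ) (hν : 0 < ν) : besselI ν 0 = 0 := by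
  unfold besselI
  have h : ∀ k : ℕ, (1 / ((Nat.factorial k : ℝ) * Real.Gamma (ν + k + 1)))
      * ((0:ℝ)/2) ^ (2*(k:ℝ)+ν) = 0 := by
    intro k
    rw [zero_div, Real.zero_rpow (by positivity)]
    ring
  rw [tsum_congr h, tsum_zero]

set_option maxHeartbeats 1000000 in
lemma one_le_two_rpow_gamma (ν : ℝ) (hν : 0 < ν) :
    1 ≤ (2:ℝ)^ν * Real.Gamma (ν + 1) := by
  have hπ0 : (0:ℝ) < Real.pi := Real.pi_pos
  have hg2 : Real.Gamma 2 = 1 := Real.Gamma_two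
  have hg3 : Real.Gamma 3 = 2 := by
    rw [show (3:ℝ) = 2 + 1 by norm_num, Real.Gamma_add_one (by norm_num), hg2]; norm_num
  have hg12 : Real.Gamma (1/2) = Real.sqrt Real.pi := Real.Gamma_one_half_eq
  have hg32 : Real.Gamma (3/2) = Real.sqrt Real.pi / 2 := by
    rw [show (3/2:ℝ) = 1/2 + 1 by norm_num, Real.Gamma_add_one (by norm_num), hg12]; ring
  have hg52 : Real.Gamma (5/2) = 3 * Real.sqrt Real.pi / 4 := by
    rw [show (5/2:ℝ) = 3/2 + 1 by norm_num, Real.Gamma_add_one (by norm_num), hg32]; ring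
  have hsqrtpos : 0 < Real.sqrt Real.pi := Real.sqrt_pos.2 hπ0
  -- slope inequality for log ∘ Gamma
  have hsl := Real.convexOn_log_Gamma.slope_mono_adjacent
    (x := 5/2) (y := 3) (z := 3 + ν)
    (Set.mem_Ioi.2 (by norm_num)) (Set.mem_Ioi.2 (by linarith)) (by norm_num) (by linarith)
  simp only [Function.comp] at hsl
  rw [hg3, hg52] at hsl
  -- hsl : (log 2 - log (3√π/4)) / (3 - 5/2) ≤ (log Γ(3+ν) - log 2) / (3 + ν - 3)
  have hν' : (0:ℝ) < (3:ℝ) + ν - 3 := by linarith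
  have hslope : Real.log (Real.Gamma (3+ν))
      ≥ Real.log 2 + 2*ν*(Real.log 2 - Real.log (3 * Real.sqrt Real.pi / 4)) := by
    have h := (div_le_div_iff₀ (by norm_num : (0:ℝ) < 3 - 5/2) hν').1 hsl
    nlinarith [h]
  -- expand Γ(3+ν)
  have hΓ1 : 0 < Real.Gamma (1+ν) := Real.Gamma_pos_of_pos (by linarith)
  have e2 : Real.Gamma (2+ν) = (1+ν) * Real.Gamma (1+ν) := by
    rw [show (2:ℝ)+ν = (1+ν)+1 by ring, Real.Gamma_add_one (by positivity)]
  have e1 : Real.Gamma (3+ν) = (2+ν) * ((1+ν) * Real.Gamma (1+ν)) := by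
    rw [show (3:ℝ)+ν = (2+ν)+1 by ring, Real.Gamma_add_one (by positivity), e2]
  have hlog3 : Real.log (Real.Gamma (3+ν))
      = Real.log (2+ν) + Real.log (1+ν) + Real.log (Real.Gamma (1+ν)) := by
    rw [e1, Real.log_mul (by positivity) (by positivity),
      Real.log_mul (by positivity) hΓ1.ne']
    ring
  -- bounds on logs
  have hb1 : Real.log (1+ν) ≤ ν := by
    have := Real.log_le_sub_one_of_pos (show (0:ℝ) < 1+ν by linarith)
    linarith
  have hb2 : Real.log (2+ν) ≤ Real.log 2 + ν/2 := by
    have h1 : (2:ℝ)+ν = 2 * (1+ν/2) := by ring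
    rw [h1, Real.log_mul (by norm_num) (by positivity)]
    have := Real.log_le_sub_one_of_pos (show (0:ℝ) < 1+ν/2 by linarith)
    linarith
  -- value of log Γ(5/2)
  have hlog52 : Real.log (3 * Real.sqrt Real.pi / 4)
      = Real.log 3 + Real.log Real.pi / 2 - Real.log 4 := by
    rw [Real.log_div (by positivity) (by norm_num),
      Real.log_mul (by norm_num) hsqrtpos.ne', Real.log_sqrt hπ0.le]
  -- numeric inequality : 7 log 2 - 2 log 3 - log π ≥ 3/2
  have hnum : (3:ℝ)/2 ≤ 7*Real.log 2 - 2*Real.log 3 - Real.log Real.pi := by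
    have hid : 7*Real.log 2 - 2*Real.log 3 - Real.log Real.pi
        = Real.log (128/(9*Real.pi)) := by
      rw [Real.log_div (by norm_num) (by positivity),
        Real.log_mul (by norm_num) hπ0.ne',
        show (128:ℝ) = 2^7 by norm_num, show (9:ℝ) = 3^2 by norm_num,
        Real.log_pow, Real.log_pow]
      push_cast; ring
    rw [hid, Real.le_log_iff_exp_le (by positivity)]
    have hepos := Real.exp_pos ((3:ℝ)/2)
    have he1pos := Real.exp_pos (1:ℝ)
    have hb : Real.exp 1 < 2.7182818286 := Real.exp_one_lt_d9
    have he3 : Real.exp ((3:ℝ)/2) ^ 2 = Real.exp 1 ^ 3 := by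
      rw [← Real.exp_nat_mul, ← Real.exp_nat_mul]; norm_num
    have hE2 : Real.exp 1 ^ 2 < 2.7182818286^2 := by
      have := mul_lt_mul'' hb hb he1pos.le he1pos.le
      calc Real.exp 1 ^ 2 = Real.exp 1 * Real.exp 1 := by ring
        _ < 2.7182818286 * 2.7182818286 := this
        _ = 2.7182818286^2 := by ring
    have hE3 : Real.exp 1 ^ 3 < 2.7182818286^3 := by
      have := mul_lt_mul'' hE2 hb (by positivity) he1pos.le
      calc Real.exp 1 ^ 3 = Real.exp 1 ^ 2 * Real.exp 1 := by ring
        _ < 2.7182818286^2 * 2.7182818286 := this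
        _ = 2.7182818286^3 := by ring
    have ht2 : Real.exp ((3:ℝ)/2) ^ 2 < 20.0856 := by
      rw [he3]
      calc Real.exp 1 ^ 3 < 2.7182818286^3 := hE3
        _ < 20.0856 := by norm_num
    have ht : Real.exp ((3:ℝ)/2) < 4.4822 := by nlinarith [ht2, hepos]
    have hπu : Real.pi < 3.141593 := Real.pi_lt_d6
    rw [le_div_iff₀ (by positivity)]
    have hprod := mul_lt_mul'' ht hπu hepos.le hπ0.le
    nlinarith [hprod]
  -- combine
  have hmain : 0 ≤ ν * Real.log 2 + Real.log (Real.Gamma (1+ν)) := by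
    have hcomb : Real.log (Real.Gamma (1+ν))
        ≥ Real.log 2 + 2*ν*(Real.log 2 - Real.log (3 * Real.sqrt Real.pi / 4))
          - Real.log (2+ν) - Real.log (1+ν) := by
      rw [hlog3] at hslope; linarith
    rw [hlog52] at hcomb
    -- log 4 = 2 log 2
    have hlog4 : Real.log 4 = 2 * Real.log 2 := by
      rw [show (4:ℝ) = 2^2 by norm_num, Real.log_pow]; push_cast; ring
    rw [hlog4] at hcomb
    nlinarith [hcomb, hb1, hb2, hnum, hν.le, mul_le_mul_of_nonneg_left hnum hν.le]
  have hΓν1 : 0 < Real.Gamma (ν+1) := Real.Gamma_pos_of_pos (by linarith)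
  have h1ν : (1:ℝ)+ν = ν+1 := by ring
  have hexp : (2:ℝ)^ν * Real.Gamma (ν+1)
      = Real.exp (ν * Real.log 2 + Real.log (Real.Gamma (1+ν))) := by
    rw [Real.exp_add, h1ν, Real.exp_log hΓν1,
      Real.rpow_def_of_pos (by norm_num : (0:ℝ) < 2), mul_comm (Real.log 2) ν]
  rw [hexp]
  calc (1:ℝ) = Real.exp 0 := Real.exp_zero.symm
    _ ≤ _ := Real.exp_le_exp.2 hmain

end JfunAux

open JfunAux in
set_option maxHeartbeats 1000000 in
theorem Jfun_lt_Jfun_neg (κ ν τ : ℝ) (hκ : 0 < κ) (hν : 0 < ν) (hτ : 0 < τ)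
    (w : ℝ) (hw0 : 0 < w) (hw1 : w ≤ 1) :
    Jfun κ ν τ w < Jfun κ ν τ (-w) := by
  have hτ2 : (0:ℝ) < τ^2 := by positivity
  have hinv : 1/τ^2 = (1/τ)^2 := by rw [one_div, one_div, ← inv_pow]
  have hw2 : w^2 ≤ 1 := by nlinarith
  obtain ⟨rB, hrB⟩ : ∃ x : ℝ, x = κ ^ 2 + 2 * κ * w / τ + 1 / τ ^ 2 := ⟨_, rfl⟩
  obtain ⟨rA, hrA⟩ : ∃ x : ℝ, x = κ ^ 2 + 2 * κ * (-w) / τ + 1 / τ ^ 2 := ⟨_, rfl⟩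
  have hrBpos : 0 < rB := by rw [hrB]; positivity
  have hrAeq : rA = (κ - w * (1/τ))^2 + (1 - w^2) * (1/τ)^2 := by
    rw [hrA, hinv]; ring
  have hrBeq : rB = (κ + w * (1/τ))^2 + (1 - w^2) * (1/τ)^2 := by
    rw [hrB, hinv]; ring
  have hrAnn : 0 ≤ rA := by
    rw [hrAeq]
    have h1 := sq_nonneg (κ - w * (1/τ))
    have h2 : 0 ≤ (1 - w^2) * (1/τ)^2 := mul_nonneg (by linarith) (sq_nonneg _)
    linarith
  obtain ⟨B, hBset⟩ : ∃ x : ℝ, x = Mfun κ τ w := ⟨_, rfl⟩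
  obtain ⟨A, hAset⟩ : ∃ x : ℝ, x = Mfun κ τ (-w) := ⟨_, rfl⟩
  have hBdef : B = Real.sqrt rB := by rw [hBset, hrB]; rfl
  have hAdef : A = Real.sqrt rA := by rw [hAset, hrA]; rfl
  have hB2 : B^2 = rB := by rw [hBdef]; exact Real.sq_sqrt hrBpos.le
  have hA2 : A^2 = rA := by rw [hAdef]; exact Real.sq_sqrt hrAnn
  have hBpos : 0 < B := by rw [hBdef]; exact Real.sqrt_pos.2 hrBpos
  have hAnn : 0 ≤ A := by rw [hAdef]; exact Real.sqrt_nonneg _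
  have hτi : 0 < 1/τ := by positivity
  have hrBA : rA < rB := by
    rw [hrAeq, hrBeq]
    have : 0 < κ * (w * (1/τ)) := by positivity
    nlinarith [this]
  have hALB : A < B := by nlinarith [hA2, hB2, hAnn, hBpos, hrBA]
  have hsum : 2*κ ≤ A + B := by
    have hAB : A * B = Real.sqrt (rA * rB) := by
      rw [hAdef, hBdef, ← Real.sqrt_mul hrAnn]
    have h1 : (κ^2 - (1/τ)^2)^2 ≤ rA * rB := by
      rw [hrAeq, hrBeq]
      nlinarith [sq_nonneg (κ * (w * (1/τ))), sq_nonneg (κ - w*(1/τ)), sq_nonneg (κ + w*(1/τ)),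
        mul_nonneg (mul_nonneg (sub_nonneg.2 hw2) (sq_nonneg (1/τ))) (sq_nonneg (κ - w*(1/τ))),
        mul_nonneg (mul_nonneg (sub_nonneg.2 hw2) (sq_nonneg (1/τ))) (sq_nonneg (κ + w*(1/τ))),
        mul_nonneg (mul_nonneg (sub_nonneg.2 hw2) (sq_nonneg (1/τ)))
          (mul_nonneg (sub_nonneg.2 hw2) (sq_nonneg (1/τ)))]
    have h2 : κ^2 - (1/τ)^2 ≤ A * B := by
      rw [hAB]
      calc κ^2 - (1/τ)^2 ≤ |κ^2 - (1/τ)^2| := le_abs_self _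
        _ = Real.sqrt ((κ^2 - (1/τ)^2)^2) := (Real.sqrt_sq_eq_abs _).symm
        _ ≤ Real.sqrt (rA * rB) := Real.sqrt_le_sqrt h1
    have h3 : 4*κ^2 ≤ (A+B)^2 := by
      have hexpand : (A+B)^2 = rA + rB + 2*(A*B) := by rw [← hA2, ← hB2]; ring
      rw [hexpand, hrAeq, hrBeq]
      nlinarith [h2]
    nlinarith [h3, hAnn, hBpos, hκ]
  have hBA : B - A ≤ 2*w/τ := by
    have h5 : B^2 - A^2 = 4*κ*w*(1/τ) := by rw [hA2, hB2, hrAeq, hrBeq]; ring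
    have h6 : (B-A)*(A+B) = 4*κ*w*(1/τ) := by nlinarith [h5]
    have h7 : B - A ≤ 2*w*(1/τ) := by
      nlinarith [h6, hsum, hALB.le, hκ, mul_pos hw0 hτi,
        mul_le_mul_of_nonneg_left hsum (sub_nonneg.2 hALB.le)]
    calc B - A ≤ 2*w*(1/τ) := h7
      _ = 2*w/τ := by ring
  suffices H : Real.log (besselI ν B / B ^ ν) - Real.log (besselI ν A / A ^ ν) < 2*w/τ by
    have expand : Jfun κ ν τ (-w) - Jfun κ ν τ w
        = 2*w/τ - (Real.log (besselI ν B / B ^ ν) - Real.log (besselI ν A / A ^ ν)) := by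
      unfold Jfun
      rw [← hBset, ← hAset]
      ring
    have h9 : 0 < Jfun κ ν τ (-w) - Jfun κ ν τ w := by rw [expand]; linarith
    linarith
  rcases eq_or_lt_of_le hAnn with hA0 | hApos
  · -- degenerate case A = 0 : forces w = 1, 1/τ = κ
    have hrA0 : rA = 0 := by
      have h6 : Real.sqrt rA = 0 := by rw [← hAdef, ← hA0]
      have h7 : rA ≤ 0 := Real.sqrt_eq_zero'.1 h6
      linarith
    rw [hrAeq] at hrA0
    have e1 := sq_nonneg (κ - w * (1/τ))
    have e2 : 0 ≤ (1 - w^2) * (1/τ)^2 := mul_nonneg (by linarith) (sq_nonneg _)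
    have hz1 : (κ - w * (1/τ))^2 = 0 := by linarith
    have hz2 : (1 - w^2) * (1/τ)^2 = 0 := by linarith
    have hww : w = 1 := by
      have h8 : 1 - w^2 = 0 := by
        rcases mul_eq_zero.1 hz2 with h | h
        · exact h
        · exact absurd h (by positivity)
      nlinarith [h8, hw0]
    have hκτ : κ = w * (1/τ) := by
      have := pow_eq_zero_iff (n := 2) (by norm_num) |>.1 hz1
      linarith [this]
    have hBval : B = 2*κ := by
      have h9 : rB = (2*κ)^2 := by
        rw [hrBeq, ← hκτ, hww]
        ring
      rw [hBdef, h9, Real.sqrt_sq (by positivity)]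
    have hIA : besselI ν A / A ^ ν = 0 := by
      rw [← hA0, besselI_zero ν hν, zero_div]
    rw [hIA, Real.log_zero, sub_zero, hBval,
      besselI_div ν hν (2*κ) (by positivity)]
    have hΓ : 0 < Real.Gamma (ν+1) := Real.Gamma_pos_of_pos (by linarith)
    have h2ν : (0:ℝ) < (2:ℝ)^ν := Real.rpow_pos_of_pos (by norm_num) ν
    have hgle := gS_le_cosh ν hν (2*κ)
    have hce : Real.cosh (2*κ) < Real.exp (2*κ) := cosh_lt_exp (by positivity)
    have hγ := one_le_two_rpow_gamma ν hν
    have h8 : gS ν (2*κ) < Real.exp (2*κ) / Real.Gamma (ν+1) := by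
      exact lt_of_le_of_lt hgle (div_lt_div_of_pos_right hce hΓ)
    have h9 : Real.exp (2*κ) / Real.Gamma (ν+1) ≤ Real.exp (2*κ) * (2:ℝ)^ν := by
      rw [div_le_iff₀ hΓ]
      calc Real.exp (2*κ) = Real.exp (2*κ) * 1 := by ring
        _ ≤ Real.exp (2*κ) * ((2:ℝ)^ν * Real.Gamma (ν+1)) :=
            mul_le_mul_of_nonneg_left hγ (Real.exp_pos _).le
        _ = Real.exp (2*κ) * (2:ℝ)^ν * Real.Gamma (ν+1) := by ring
    have hfinal : gS ν (2*κ) / (2:ℝ)^ν < Real.exp (2*κ) := by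
      rw [div_lt_iff₀ h2ν]
      calc gS ν (2*κ) < Real.exp (2*κ) / Real.Gamma (ν+1) := h8
        _ ≤ Real.exp (2*κ) * (2:ℝ)^ν := h9
    have hlogf := Real.log_lt_log (div_pos (gS_pos ν hν (2*κ)) h2ν) hfinal
    rw [Real.log_exp] at hlogf
    have h2wτ : 2*w/τ = 2*κ := by
      rw [hww] at hκτ ⊢
      rw [hκτ]
      ring
    linarith [hlogf, h2wτ.ge, h2wτ.le]
  · -- main case A > 0
    rw [besselI_div ν hν B hBpos, besselI_div ν hν A hApos]
    have h2ν : (0:ℝ) < (2:ℝ)^ν := Real.rpow_pos_of_pos (by norm_num) ν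
    rw [Real.log_div (gS_pos ν hν B).ne' h2ν.ne', Real.log_div (gS_pos ν hν A).ne' h2ν.ne']
    have hch := cheb ν hν hApos.le hALB.le
    have hcl := cosh_mul_exp hALB
    have hgl : gS ν B < gS ν A * Real.exp (B - A) := by
      have hca := Real.cosh_pos A
      have step2 : gS ν A * Real.cosh B < gS ν A * (Real.cosh A * Real.exp (B - A)) :=
        mul_lt_mul_of_pos_left hcl (gS_pos ν hν A)
      have step3 : gS ν B * Real.cosh A < (gS ν A * Real.exp (B - A)) * Real.cosh A := by
        calc gS ν B * Real.cosh A ≤ gS ν A * Real.cosh B := hch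
          _ < gS ν A * (Real.cosh A * Real.exp (B-A)) := step2
          _ = (gS ν A * Real.exp (B-A)) * Real.cosh A := by ring
      exact lt_of_mul_lt_mul_right step3 hca.le
    have hlog : Real.log (gS ν B) < Real.log (gS ν A) + (B - A) := by
      have h7 := Real.log_lt_log (gS_pos ν hν B) hgl
      rwa [Real.log_mul (gS_pos ν hν A).ne' (Real.exp_ne_zero _), Real.log_exp] at h7
    linarith [hBA, hlog]
end
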